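/- arXiv:1406.5461 — 12 statements merged into one kernel-verified Lean document; each statement's English description precedes it below -/
import Mathlib

section
/- Assume the coexistence condition (ss): r_n/(1+Q_n) > 1. Then the point E* = (B*, P*) defined by B_1* = s_1, B_j* = s_j − s_{j−1} for 1 < j ≤ n, P_j* = (r_j − r_{j+1})/(1+Q_n) for 1 ≤ j < n, and P_n* = r_n/(1+Q_n) − 1 has all 2n components strictly positive, is an equilibrium of (LV) (the right-hand sides of all 2n equations vanish at E*), satisfies Σ_{i=1}^n B_i* = s_n and Σ_{i=1}^n r_i B_i* = Q_n, and is the unique equilibrium of (LV) with all 2n components strictly positive. -/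
open Filter

noncomputable def lvQ (r s : ℕ → ℝ) (k : ℕ) : ℝ :=
  (∑ i ∈ Finset.Icc 1 (k - 1), s i * (r i - r (i + 1))) + s k * r k

noncomputable def lvBstar (s : ℕ → ℝ) (j : ℕ) : ℝ :=
  if j = 1 then s 1 else s j - s (j - 1)

noncomputable def lvPstar (n : ℕ) (r s : ℕ → ℝ) (j : ℕ) : ℝ :=
  if j = n then r n / (1 + lvQ r s n) - 1 else (r j - r (j + 1)) / (1 + lvQ r s n)

def IsEquilibLV (n : ℕ) (r s : ℕ → ℝ) (B P : ℕ → ℝ) : Prop :=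
  (∀ i ∈ Finset.Icc 1 n,
      r i * B i * (1 - 1 / r i - ∑ j ∈ Finset.Icc 1 n, (B j + s j * P j))
        - B i * ∑ j ∈ Finset.Icc i n, P j = 0) ∧
  (∀ i ∈ Finset.Icc 1 n, (s i)⁻¹ * P i * ((∑ j ∈ Finset.Icc 1 i, B j) - s i) = 0)

lemma sum_Icc_bot (f : ℕ → ℝ) {a b : ℕ} (h : a ≤ b) :
    ∑ j ∈ Finset.Icc a b, f j = f a + ∑ j ∈ Finset.Icc (a+1) b, f j := by
  rw [← Finset.Ioc_insert_left h, Finset.sum_insert (by simp), Finset.Icc_add_one_left_eq_Ioc]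

lemma lvB_partial (s : ℕ → ℝ) : ∀ k, 1 ≤ k → ∑ i ∈ Finset.Icc 1 k, lvBstar s i = s k := by
  intro k hk
  induction k, hk using Nat.le_induction with
  | base => simp [lvBstar]
  | succ k hk ih =>
    rw [Finset.sum_Icc_succ_top (by omega), ih]
    have : lvBstar s (k+1) = s (k+1) - s k := by
      simp [lvBstar, show k + 1 ≠ 1 by omega, show k ≠ 0 by omega]
    rw [this]; ring

lemma lvrB_sum (r s : ℕ → ℝ) : ∀ k, 1 ≤ k → ∑ i ∈ Finset.Icc 1 k, r i * lvBstar s i = lvQ r s k := by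
  intro k hk
  induction k, hk using Nat.le_induction with
  | base => simp [lvBstar, lvQ]; ring
  | succ k hk ih =>
    rw [Finset.sum_Icc_succ_top (by omega), ih]
    have h1 : lvBstar s (k+1) = s (k+1) - s k := by
      simp [lvBstar, show k + 1 ≠ 1 by omega, show k ≠ 0 by omega]
    have h2 : lvQ r s (k+1)
        = (∑ i ∈ Finset.Icc 1 k, s i * (r i - r (i + 1))) + s (k+1) * r (k+1) := by
      simp [lvQ]
    have h3 : lvQ r s k
        = (∑ i ∈ Finset.Icc 1 (k-1), s i * (r i - r (i + 1))) + s k * r k := rfl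
    have h4 : ∑ i ∈ Finset.Icc 1 k, s i * (r i - r (i + 1))
        = (∑ i ∈ Finset.Icc 1 (k-1), s i * (r i - r (i + 1))) + s k * (r k - r (k+1)) := by
      have hk' : k = (k-1) + 1 := by omega
      rw [hk', Finset.sum_Icc_succ_top (by omega), ← hk']
    rw [h1, h2, h4, h3]; ring

theorem stmt0
    (n : ℕ) (hn : 1 ≤ n) (r s : ℕ → ℝ)
    (hr : ∀ i, 1 ≤ i → i < n → r (i + 1) < r i) (hrn : 1 < r n)
    (hs1 : 0 < s 1) (hs : ∀ i, 1 ≤ i → i < n → s i < s (i + 1))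
    (hss : 1 < r n / (1 + lvQ r s n)) :
    (∀ i ∈ Finset.Icc 1 n, 0 < lvBstar s i ∧ 0 < lvPstar n r s i) ∧
    IsEquilibLV n r s (lvBstar s) (lvPstar n r s) ∧
    (∑ i ∈ Finset.Icc 1 n, lvBstar s i) = s n ∧
    (∑ i ∈ Finset.Icc 1 n, r i * lvBstar s i) = lvQ r s n ∧
    (∀ B P : ℕ → ℝ,
      (∀ i ∈ Finset.Icc 1 n, 0 < B i ∧ 0 < P i) →
      IsEquilibLV n r s B P →
      ∀ i ∈ Finset.Icc 1 n, B i = lvBstar s i ∧ P i = lvPstar n r s i) := by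
  -- basic positivity facts
  have hspos : ∀ i, 1 ≤ i → i ≤ n → 0 < s i := by
    intro i h1
    induction i, h1 using Nat.le_induction with
    | base => intro _; exact hs1
    | succ i hi ih => intro h2; exact lt_trans (ih (by omega)) (hs i hi (by omega))
  have hrge : ∀ i, 1 ≤ i → i ≤ n → r n ≤ r i := by
    have key : ∀ d i, 1 ≤ i → i + d = n → r n ≤ r i := by
      intro d
      induction d with
      | zero =>
        intro i h1 h2
        have : i = n := by omega
        subst this; exact le_refl _
      | succ d ih =>
        intro i h1 h2
        exact le_trans (ih (i+1) (by omega) (by omega)) (le_of_lt (hr i h1 (by omega)))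
    intro i h1 h2; exact key (n - i) i h1 (by omega)
  have hr1 : ∀ i, 1 ≤ i → i ≤ n → 1 < r i := fun i h1 h2 => lt_of_lt_of_le hrn (hrge i h1 h2)
  have hD : 0 < 1 + lvQ r s n := by
    by_contra h
    push_neg at h
    have : r n / (1 + lvQ r s n) ≤ 0 :=
      div_nonpos_of_nonneg_of_nonpos (by linarith) h
    linarith
  have hDne : (1 : ℝ) + lvQ r s n ≠ 0 := ne_of_gt hD
  have hDr : 1 + lvQ r s n < r n := (one_lt_div hD).mp hss
  -- tail sums of P*
  have Ptail : ∀ i, 1 ≤ i → i ≤ n →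
      ∑ j ∈ Finset.Icc i n, lvPstar n r s j = r i / (1 + lvQ r s n) - 1 := by
    have key : ∀ d i, 1 ≤ i → i + d = n →
        ∑ j ∈ Finset.Icc i n, lvPstar n r s j = r i / (1 + lvQ r s n) - 1 := by
      intro d
      induction d with
      | zero =>
        intro i h1 h2
        have : i = n := by omega
        subst this
        simp [lvPstar]
      | succ d ih =>
        intro i h1 h2
        rw [sum_Icc_bot _ (by omega : i ≤ n), ih (i+1) (by omega) (by omega)]
        have hPi : lvPstar n r s i = (r i - r (i+1)) / (1 + lvQ r s n) := by
          simp [lvPstar, show i ≠ n by omega]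
        rw [hPi]
        field_simp
        ring
    intro i h1 h2; exact key (n - i) i h1 (by omega)
  -- sum of s j * P* j
  obtain ⟨A, hA⟩ : ∃ A, ∑ i ∈ Finset.Icc 1 (n-1), s i * (r i - r (i + 1)) = A := ⟨_, rfl⟩
  have hQA : lvQ r s n = A + s n * r n := by rw [lvQ, hA]
  have SP : ∑ j ∈ Finset.Icc 1 n, s j * lvPstar n r s j
      = lvQ r s n / (1 + lvQ r s n) - s n := by
    have hm : n - 1 + 1 = n := by omega
    have e1 : ∑ j ∈ Finset.Icc 1 n, s j * lvPstar n r s j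
        = (∑ j ∈ Finset.Icc 1 (n-1), s j * lvPstar n r s j) + s n * lvPstar n r s n := by
      conv_lhs => rw [← hm]
      rw [Finset.sum_Icc_succ_top (by omega), hm]
    have e2 : ∑ j ∈ Finset.Icc 1 (n-1), s j * lvPstar n r s j
        = ∑ j ∈ Finset.Icc 1 (n-1), s j * (r j - r (j+1)) / (1 + lvQ r s n) := by
      refine Finset.sum_congr rfl ?_
      intro j hj
      obtain ⟨hj1, hj2⟩ := Finset.mem_Icc.mp hj
      have : lvPstar n r s j = (r j - r (j+1)) / (1 + lvQ r s n) := by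
        simp [lvPstar, show j ≠ n by omega]
      rw [this, mul_div_assoc]
    have e3 : ∑ j ∈ Finset.Icc 1 (n-1), s j * (r j - r (j+1)) / (1 + lvQ r s n)
        = A / (1 + lvQ r s n) := by rw [← Finset.sum_div, hA]
    have hPn : lvPstar n r s n = r n / (1 + lvQ r s n) - 1 := by simp [lvPstar]
    rw [e1, e2, e3, hPn, hQA]
    have hne : (1 : ℝ) + (A + s n * r n) ≠ 0 := by rw [← hQA]; exact hDne
    field_simp
    ring
  have hS : ∑ j ∈ Finset.Icc 1 n, (lvBstar s j + s j * lvPstar n r s j)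
      = lvQ r s n / (1 + lvQ r s n) := by
    rw [Finset.sum_add_distrib, lvB_partial s n hn, SP]; ring
  refine ⟨?_, ⟨?_, ?_⟩, lvB_partial s n hn, lvrB_sum r s n hn, ?_⟩
  · -- positivity
    intro i hi
    obtain ⟨h1, h2⟩ := Finset.mem_Icc.mp hi
    constructor
    · rcases eq_or_lt_of_le h1 with h | h
      · rw [lvBstar, ← h]; simpa using hs1
      · have : lvBstar s i = s i - s (i-1) := by simp [lvBstar, show i ≠ 1 by omega]
        rw [this]
        have := hs (i-1) (by omega) (by omega)
        have hi1 : i - 1 + 1 = i := by omega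
        rw [hi1] at this
        linarith
    · by_cases hin : i = n
      · subst hin
        have : lvPstar i r s i = r i / (1 + lvQ r s i) - 1 := by simp [lvPstar]
        rw [this]
        linarith [hss]
      · have : lvPstar n r s i = (r i - r (i+1)) / (1 + lvQ r s n) := by
          simp [lvPstar, hin]
        rw [this]
        exact div_pos (by linarith [hr i h1 (by omega)]) hD
  · -- B equations
    intro i hi
    obtain ⟨h1, h2⟩ := Finset.mem_Icc.mp hi
    rw [hS, Ptail i h1 h2]
    have hri : r i ≠ 0 := by have := hr1 i h1 h2; linarith
    field_simp
    ring
  · -- P equations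
    intro i hi
    obtain ⟨h1, h2⟩ := Finset.mem_Icc.mp hi
    rw [lvB_partial s i h1]
    ring
  · -- uniqueness
    intro B P hpos heq
    obtain ⟨heqB, heqP⟩ := heq
    have hBpart : ∀ k, 1 ≤ k → k ≤ n → ∑ j ∈ Finset.Icc 1 k, B j = s k := by
      intro k h1 h2
      have h := heqP k (Finset.mem_Icc.mpr ⟨h1, h2⟩)
      have hsk : s k ≠ 0 := ne_of_gt (hspos k h1 h2)
      have hPk : P k ≠ 0 := ne_of_gt (hpos k (Finset.mem_Icc.mpr ⟨h1, h2⟩)).2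
      rcases mul_eq_zero.mp h with h' | h'
      · rcases mul_eq_zero.mp h' with h'' | h''
        · exact absurd h'' (inv_ne_zero hsk)
        · exact absurd h'' hPk
      · linarith
    have hBeq : ∀ i ∈ Finset.Icc 1 n, B i = lvBstar s i := by
      intro i hi
      obtain ⟨h1, h2⟩ := Finset.mem_Icc.mp hi
      rcases eq_or_lt_of_le h1 with h | h
      · have hb := hBpart 1 le_rfl hn
        simp only [Finset.Icc_self, Finset.sum_singleton] at hb
        rw [← h, lvBstar]; simpa using hb
      · have hm : i - 1 + 1 = i := by omega
        have ha := hBpart (i-1) (by omega) (by omega)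
        have hb := hBpart i h1 h2
        rw [← hm, Finset.sum_Icc_succ_top (by omega), hm] at hb
        have hlv : lvBstar s i = s i - s (i-1) := by simp [lvBstar, show i ≠ 1 by omega]
        rw [hlv]
        rw [ha] at hb
        linarith
    have hT : ∀ i, 1 ≤ i → i ≤ n →
        ∑ j ∈ Finset.Icc i n, P j
          = r i - 1 - r i * ∑ j ∈ Finset.Icc 1 n, (B j + s j * P j) := by
      intro i h1 h2
      have h := heqB i (Finset.mem_Icc.mpr ⟨h1, h2⟩)
      have hB : B i ≠ 0 := ne_of_gt (hpos i (Finset.mem_Icc.mpr ⟨h1, h2⟩)).1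
      have hri : r i ≠ 0 := by have := hr1 i h1 h2; linarith
      have h2' : B i * (r i * (1 - 1/r i - ∑ j ∈ Finset.Icc 1 n, (B j + s j * P j))
          - ∑ j ∈ Finset.Icc i n, P j) = 0 := by linear_combination h
      rcases mul_eq_zero.mp h2' with h' | h'
      · exact absurd h' hB
      · have hexp : r i * (1 - 1/r i - ∑ j ∈ Finset.Icc 1 n, (B j + s j * P j))
            = r i - 1 - r i * ∑ j ∈ Finset.Icc 1 n, (B j + s j * P j) := by
          field_simp
        rw [hexp] at h'
        linarith
    set Sv := ∑ j ∈ Finset.Icc 1 n, (B j + s j * P j) with hSvdef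
    have hPfor : ∀ i, 1 ≤ i → i < n → P i = (r i - r (i+1)) * (1 - Sv) := by
      intro i h1 h2
      have ha := hT i h1 (le_of_lt h2)
      have hb := hT (i+1) (by omega) h2
      rw [sum_Icc_bot P (le_of_lt h2), hb] at ha
      linear_combination ha
    have hPn : P n = r n * (1 - Sv) - 1 := by
      have h := hT n hn le_rfl
      rw [Finset.Icc_self, Finset.sum_singleton] at h
      linear_combination h
    have hSeq : Sv = lvQ r s n * (1 - Sv) := by
      have e0 : Sv = (∑ j ∈ Finset.Icc 1 n, B j) + ∑ j ∈ Finset.Icc 1 n, s j * P j :=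
        Finset.sum_add_distrib
      rw [hBpart n hn le_rfl] at e0
      have hm : n - 1 + 1 = n := by omega
      have e1 : ∑ j ∈ Finset.Icc 1 n, s j * P j
          = (∑ j ∈ Finset.Icc 1 (n-1), s j * P j) + s n * P n := by
        conv_lhs => rw [← hm]
        rw [Finset.sum_Icc_succ_top (by omega), hm]
      have e2 : ∑ j ∈ Finset.Icc 1 (n-1), s j * P j
          = ∑ j ∈ Finset.Icc 1 (n-1), s j * (r j - r (j+1)) * (1 - Sv) := by
        refine Finset.sum_congr rfl ?_
        intro j hj
        obtain ⟨hj1, hj2⟩ := Finset.mem_Icc.mp hj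
        rw [hPfor j hj1 (by omega), mul_assoc]
      have e3 : ∑ j ∈ Finset.Icc 1 (n-1), s j * (r j - r (j+1)) * (1 - Sv)
          = A * (1 - Sv) := by rw [← Finset.sum_mul, hA]
      rw [e1, e2, e3, hPn] at e0
      rw [hQA]
      linear_combination e0
    have hSvval : 1 - Sv = 1 / (1 + lvQ r s n) := by
      rw [eq_div_iff hDne]
      linear_combination - hSeq
    intro i hi
    obtain ⟨h1, h2⟩ := Finset.mem_Icc.mp hi
    refine ⟨hBeq i hi, ?_⟩
    by_cases hin : i = n
    · subst hin
      have : lvPstar i r s i = r i / (1 + lvQ r s i) - 1 := by simp [lvPstar]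
      rw [this, hPn, hSvval, mul_one_div]
    · have : lvPstar n r s i = (r i - r (i+1)) / (1 + lvQ r s n) := by
        simp [lvPstar, hin]
      rw [this, hPfor i h1 (by omega), hSvval, mul_one_div]
end

section
/- If there exists an equilibrium (B,P) of (LV) with B_i > 0 and P_i > 0 for all 1 ≤ i ≤ n, then r_n/(1+Q_n) > 1. -/
open Filter

theorem stmt1
    (n : ℕ) (hn : 1 ≤ n) (r s : ℕ → ℝ)
    (hr : ∀ i, 1 ≤ i → i < n → r (i + 1) < r i) (hrn : 1 < r n)
    (hs1 : 0 < s 1) (hs : ∀ i, 1 ≤ i → i < n → s i < s (i + 1))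
    (B P : ℕ → ℝ)
    (hpos : ∀ i ∈ Finset.Icc 1 n, 0 < B i ∧ 0 < P i)
    (heq : IsEquilibLV n r s B P) :
    1 < r n / (1 + lvQ r s n) := by
  obtain ⟨m, rfl⟩ : ∃ m, n = m + 1 := ⟨n - 1, by omega⟩
  obtain ⟨h1, h2⟩ := heq
  set T : ℝ := ∑ j ∈ Finset.Icc 1 (m+1), (B j + s j * P j) with hT
  set u : ℝ := 1 - T with hu
  have hspos : ∀ i, 1 ≤ i → i ≤ m + 1 → 0 < s i := by
    intro i hi1 hi2
    induction i with
    | zero => omega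
    | succ k ih =>
      rcases Nat.eq_or_lt_of_le hi1 with h | h
      · exact h ▸ hs1
      · exact lt_trans (ih (by omega) (by omega)) (hs k (by omega) (by omega))
  have hrpos : ∀ i, 1 ≤ i → i ≤ m + 1 → 1 < r i := by
    have key : ∀ k i, 1 ≤ i → i + k = m + 1 → 1 < r i := by
      intro k
      induction k with
      | zero =>
        intro i hi1 hik
        have h0 : i = m + 1 := by omega
        subst h0
        exact hrn
      | succ k ih =>
        intro i hi1 hik
        have h' := hr i hi1 (by omega)
        have h'' := ih (i + 1) (by omega) (by omega)
        linarith
    intro i hi1 hi2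
    exact key (m + 1 - i) i hi1 (by omega)
  have hBsum : ∀ i, 1 ≤ i → i ≤ m + 1 → (∑ j ∈ Finset.Icc 1 i, B j) = s i := by
    intro i hi1 hi2
    have h := h2 i (Finset.mem_Icc.mpr ⟨hi1, hi2⟩)
    have hsne : (s i)⁻¹ ≠ 0 := inv_ne_zero (ne_of_gt (hspos i hi1 hi2))
    have hPne : P i ≠ 0 := ne_of_gt (hpos i (Finset.mem_Icc.mpr ⟨hi1, hi2⟩)).2
    rcases mul_eq_zero.mp h with h' | h'
    · rcases mul_eq_zero.mp h' with h'' | h''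
      · exact absurd h'' hsne
      · exact absurd h'' hPne
    · linarith
  have hS : ∀ i, 1 ≤ i → i ≤ m + 1 →
      r i * u - 1 = ∑ j ∈ Finset.Icc i (m+1), P j := by
    intro i hi1 hi2
    have h := h1 i (Finset.mem_Icc.mpr ⟨hi1, hi2⟩)
    have hBne : B i ≠ 0 := ne_of_gt (hpos i (Finset.mem_Icc.mpr ⟨hi1, hi2⟩)).1
    have hrne : r i ≠ 0 := by have := hrpos i hi1 hi2; linarith
    have hinv : r i * (1 / r i) = 1 := by field_simp
    have h' : B i * (r i * (1 - 1 / r i - T) - ∑ j ∈ Finset.Icc i (m+1), P j) = 0 := by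
      linear_combination h
    have h'' := (mul_eq_zero.mp h').resolve_left hBne
    rw [hu]
    linear_combination h'' + hinv
  have hPeq : ∀ i, 1 ≤ i → i ≤ m → P i = (r i - r (i + 1)) * u := by
    intro i hi1 hi2
    have hA := hS i hi1 (by omega)
    have hB' := hS (i + 1) (by omega) (by omega)
    have hsplit : (∑ j ∈ Finset.Icc i (m+1), P j)
        = P i + ∑ j ∈ Finset.Icc (i+1) (m+1), P j := by
      have hins : Finset.Icc i (m+1) = insert i (Finset.Icc (i+1) (m+1)) := by
        ext x; simp only [Finset.mem_Icc, Finset.mem_insert]; omega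
      rw [hins, Finset.sum_insert (by simp [Finset.mem_Icc])]
    rw [hsplit] at hA
    linear_combination hB' - hA
  have hPn : P (m + 1) = r (m + 1) * u - 1 := by
    have h := hS (m + 1) (by omega) le_rfl
    rw [Finset.Icc_self, Finset.sum_singleton] at h
    linarith
  have hsum2 : (∑ j ∈ Finset.Icc 1 (m+1), s j * P j)
      = (∑ i ∈ Finset.Icc 1 m, s i * (r i - r (i + 1))) * u + s (m+1) * P (m+1) := by
    rw [Finset.sum_Icc_succ_top (by omega : 1 ≤ m + 1)]
    congr 1
    rw [Finset.sum_mul]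
    apply Finset.sum_congr rfl
    intro i hi
    simp only [Finset.mem_Icc] at hi
    rw [hPeq i hi.1 hi.2]; ring
  have hTsum : T = s (m + 1) + ∑ j ∈ Finset.Icc 1 (m+1), s j * P j := by
    rw [hT, Finset.sum_add_distrib, hBsum (m + 1) (by omega) le_rfl]
  have hQ : lvQ r s (m + 1)
      = (∑ i ∈ Finset.Icc 1 m, s i * (r i - r (i + 1))) + s (m+1) * r (m+1) := by
    simp [lvQ]
  have hkey : u * (1 + lvQ r s (m + 1)) = 1 := by
    rw [hQ, hu]
    linear_combination -hTsum - hsum2 - s (m+1) * hPn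
  have hPnpos : 0 < P (m + 1) := (hpos (m + 1) (Finset.mem_Icc.mpr ⟨by omega, le_rfl⟩)).2
  have hru : 1 < r (m + 1) * u := by linarith [hPn]
  have hupos : 0 < u := by nlinarith [hrn]
  have hQpos : 0 < 1 + lvQ r s (m + 1) := by nlinarith [hkey]
  rw [lt_div_iff₀ hQpos]
  nlinarith [hkey]
end

section
/- Assume the coexistence condition (ss): r_n/(1+Q_n) > 1. Then the point E† = (B†, P†) defined by B_j† = B_j* for 1 ≤ j < n, B_n† = B_n* + (1 − (1+Q_n)/r_n), P_j† = P_j* · (1+Q_n)/r_n for 1 ≤ j < n, and P_n† = 0, is an equilibrium of (LV), has all components strictly positive except P_n† = 0, and is the unique equilibrium of (LV) whose components are all strictly positive except that P_n = 0. -/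
open Filter

noncomputable def lvBdag (n : ℕ) (r s : ℕ → ℝ) (j : ℕ) : ℝ :=
  if j = n then lvBstar s n + (1 - (1 + lvQ r s n) / r n) else lvBstar s j

noncomputable def lvPdag (n : ℕ) (r s : ℕ → ℝ) (j : ℕ) : ℝ :=
  if j = n then 0 else lvPstar n r s j * ((1 + lvQ r s n) / r n)

-- positivity of s
lemma lv2_spos (n : ℕ) (s : ℕ → ℝ) (hs1 : 0 < s 1)
    (hs : ∀ i, 1 ≤ i → i < n → s i < s (i + 1)) :
    ∀ i, 1 ≤ i → i ≤ n → 0 < s i := by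
  intro i h1
  induction i, h1 using Nat.le_induction with
  | base => intro _; exact hs1
  | succ k hk ih =>
    intro h2
    have h3 : k < n := Nat.lt_of_succ_le h2
    exact lt_trans (ih (le_of_lt h3)) (hs k hk h3)

lemma lv2_rmono (n : ℕ) (r : ℕ → ℝ)
    (hr : ∀ i, 1 ≤ i → i < n → r (i + 1) < r i) :
    ∀ i j, 1 ≤ i → i ≤ j → j ≤ n → r j ≤ r i := by
  intro i j h1 hij
  induction j, hij using Nat.le_induction with
  | base => intro _; exact le_rfl
  | succ k hk ih =>
    intro h2
    have h3 : k < n := Nat.lt_of_succ_le h2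
    exact le_trans (le_of_lt (hr k (le_trans h1 hk) h3)) (ih (le_of_lt h3))

lemma lv2_Bsum (s : ℕ → ℝ) :
    ∀ k, 1 ≤ k → (∑ j ∈ Finset.Icc 1 k, lvBstar s j) = s k := by
  intro k h1
  induction k, h1 using Nat.le_induction with
  | base => simp [lvBstar]
  | succ k hk ih =>
    rw [Finset.sum_Icc_succ_top (by omega), ih]
    have : lvBstar s (k+1) = s (k+1) - s k := by
      simp [lvBstar, Nat.add_sub_cancel]; omega
    rw [this]; ring

lemma lv2_rsum (r : ℕ → ℝ) :
    ∀ k i, i ≤ k + 1 → (∑ j ∈ Finset.Icc i k, (r j - r (j + 1))) = r i - r (k + 1) := by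
  intro k
  induction k with
  | zero => intro i hi; interval_cases i <;> simp
  | succ k ih =>
    intro i hi
    rcases Nat.lt_or_ge i (k+2) with h | h
    · rw [Finset.sum_Icc_succ_top (by omega), ih i (by omega)]; ring
    · have : i = k + 2 := by omega
      subst this
      rw [Finset.Icc_eq_empty (by omega)]
      simp

lemma lv2_Qpos (n : ℕ) (hn : 1 ≤ n) (r s : ℕ → ℝ)
    (hr : ∀ i, 1 ≤ i → i < n → r (i + 1) < r i) (hrn : 1 < r n)
    (hs1 : 0 < s 1) (hs : ∀ i, 1 ≤ i → i < n → s i < s (i + 1)) :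
    0 < lvQ r s n := by
  unfold lvQ
  have h1 : 0 ≤ ∑ i ∈ Finset.Icc 1 (n - 1), s i * (r i - r (i + 1)) := by
    apply Finset.sum_nonneg
    intro i hi
    simp only [Finset.mem_Icc] at hi
    have hin : i < n := by omega
    have := lv2_spos n s hs1 hs i hi.1 (le_of_lt hin)
    have := hr i hi.1 hin
    nlinarith
  have h2 : 0 < s n := lv2_spos n s hs1 hs n hn le_rfl
  nlinarith

lemma lv2_Bstar_pos (n : ℕ) (s : ℕ → ℝ) (hs1 : 0 < s 1)
    (hs : ∀ i, 1 ≤ i → i < n → s i < s (i + 1)) :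
    ∀ j, 1 ≤ j → j ≤ n → 0 < lvBstar s j := by
  intro j h1 h2
  unfold lvBstar
  rcases Nat.lt_or_ge j 2 with h | h
  · have : j = 1 := by omega
    simp [this, hs1]
  · have hj : j ≠ 1 := by omega
    rw [if_neg hj]
    have := hs (j - 1) (by omega) (by omega)
    have hj1 : j - 1 + 1 = j := by omega
    rw [hj1] at this
    linarith

section Main

variable (m : ℕ) (r s : ℕ → ℝ)

-- abbreviation for Q
lemma lv2_facts
    (hr : ∀ i, 1 ≤ i → i < m + 1 → r (i + 1) < r i) (hrn : 1 < r (m + 1))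
    (hs1 : 0 < s 1) (hs : ∀ i, 1 ≤ i → i < m + 1 → s i < s (i + 1))
    (hss : 1 < r (m + 1) / (1 + lvQ r s (m + 1))) :
    0 < 1 + lvQ r s (m + 1) ∧ 1 + lvQ r s (m + 1) < r (m + 1) := by
  have hQ := lv2_Qpos (m+1) (by omega) r s hr hrn hs1 hs
  have h1 : 0 < 1 + lvQ r s (m + 1) := by linarith
  exact ⟨h1, by have := (one_lt_div h1).mp hss; linarith⟩

lemma lv2_Pdag_eq
    (hQ1 : 0 < 1 + lvQ r s (m + 1)) (hrne : r (m + 1) ≠ 0) :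
    ∀ j, 1 ≤ j → j ≤ m → lvPdag (m+1) r s j = (r j - r (j + 1)) / r (m + 1) := by
  intro j h1 h2
  have hj : j ≠ m + 1 := by omega
  rw [lvPdag, if_neg hj, lvPstar, if_neg hj]
  field_simp

lemma lv2_Psum
    (hQ1 : 0 < 1 + lvQ r s (m + 1)) (hrne : r (m + 1) ≠ 0) :
    ∀ i, 1 ≤ i → i ≤ m + 1 →
      (∑ j ∈ Finset.Icc i (m + 1), lvPdag (m+1) r s j)
        = (r i - r (m + 1)) / r (m + 1) := by
  intro i h1 h2
  rw [Finset.sum_Icc_succ_top h2, lvPdag, if_pos rfl, add_zero]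
  rw [Finset.sum_congr rfl (fun j hj => by
    simp only [Finset.mem_Icc] at hj
    exact lv2_Pdag_eq m r s hQ1 hrne j (le_trans h1 hj.1) hj.2)]
  rw [← Finset.sum_div, lv2_rsum r m i h2]

lemma lv2_Bsum_lt :
    ∀ k, 1 ≤ k → k ≤ m → (∑ j ∈ Finset.Icc 1 k, lvBdag (m+1) r s j) = s k := by
  intro k h1 h2
  rw [Finset.sum_congr rfl (fun j hj => by
    simp only [Finset.mem_Icc] at hj
    rw [lvBdag, if_neg (by omega)]), lv2_Bsum s k h1]

lemma lv2_Bsum_top :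
    (∑ j ∈ Finset.Icc 1 (m + 1), lvBdag (m+1) r s j)
      = s (m + 1) + (1 - (1 + lvQ r s (m + 1)) / r (m + 1)) := by
  rw [Finset.sum_Icc_succ_top (by omega), lvBdag, if_pos rfl]
  have hcg : (∑ j ∈ Finset.Icc 1 m, lvBdag (m+1) r s j)
      = ∑ j ∈ Finset.Icc 1 m, lvBstar s j := by
    refine Finset.sum_congr rfl (fun j hj => ?_)
    simp only [Finset.mem_Icc] at hj
    rw [lvBdag, if_neg (by omega)]
  rw [hcg]
  have := lv2_Bsum s (m+1) (by omega)
  rw [Finset.sum_Icc_succ_top (by omega)] at this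
  linarith

lemma lv2_sPsum
    (hQ1 : 0 < 1 + lvQ r s (m + 1)) (hrne : r (m + 1) ≠ 0) :
    (∑ j ∈ Finset.Icc 1 (m + 1), s j * lvPdag (m+1) r s j)
      = (lvQ r s (m + 1) - s (m + 1) * r (m + 1)) / r (m + 1) := by
  rw [Finset.sum_Icc_succ_top (by omega), lvPdag, if_pos rfl, mul_zero, add_zero]
  have hcg : (∑ j ∈ Finset.Icc 1 m, s j * lvPdag (m+1) r s j)
      = ∑ j ∈ Finset.Icc 1 m, s j * (r j - r (j + 1)) / r (m + 1) := by
    refine Finset.sum_congr rfl (fun j hj => ?_)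
    simp only [Finset.mem_Icc] at hj
    rw [lv2_Pdag_eq m r s hQ1 hrne j hj.1 hj.2, mul_div_assoc']
  rw [hcg, ← Finset.sum_div]
  congr 1
  have : lvQ r s (m + 1) = (∑ i ∈ Finset.Icc 1 m, s i * (r i - r (i + 1))) + s (m+1) * r (m+1) := by
    rw [lvQ, Nat.add_sub_cancel]
  rw [this]; ring
end Main

theorem stmt2
    (n : ℕ) (hn : 1 ≤ n) (r s : ℕ → ℝ)
    (hr : ∀ i, 1 ≤ i → i < n → r (i + 1) < r i) (hrn : 1 < r n)
    (hs1 : 0 < s 1) (hs : ∀ i, 1 ≤ i → i < n → s i < s (i + 1))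
    (hss : 1 < r n / (1 + lvQ r s n)) :
    IsEquilibLV n r s (lvBdag n r s) (lvPdag n r s) ∧
    (∀ i ∈ Finset.Icc 1 n, 0 < lvBdag n r s i) ∧
    (∀ i ∈ Finset.Icc 1 n, i ≠ n → 0 < lvPdag n r s i) ∧
    lvPdag n r s n = 0 ∧
    (∀ B P : ℕ → ℝ,
      (∀ i ∈ Finset.Icc 1 n, 0 < B i) →
      (∀ i ∈ Finset.Icc 1 n, i ≠ n → 0 < P i) →
      P n = 0 →
      IsEquilibLV n r s B P →
      ∀ i ∈ Finset.Icc 1 n, B i = lvBdag n r s i ∧ P i = lvPdag n r s i) := by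
  obtain ⟨m, rfl⟩ : ∃ m, n = m + 1 := ⟨n - 1, by omega⟩
  obtain ⟨hQ1, hQr⟩ := lv2_facts m r s hr hrn hs1 hs hss
  have hrnpos : (0:ℝ) < r (m + 1) := by linarith
  have hrne : r (m + 1) ≠ 0 := ne_of_gt hrnpos
  have hrpos : ∀ i, 1 ≤ i → i ≤ m + 1 → 0 < r i := fun i h1 h2 =>
    lt_of_lt_of_le hrnpos (lv2_rmono (m+1) r hr i (m+1) h1 h2 le_rfl)
  -- the total sum S
  have hS : (∑ j ∈ Finset.Icc 1 (m + 1), (lvBdag (m+1) r s j + s j * lvPdag (m+1) r s j))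
      = 1 - 1 / r (m + 1) := by
    rw [Finset.sum_add_distrib, lv2_Bsum_top m r s, lv2_sPsum m r s hQ1 hrne]
    field_simp
    ring
  refine ⟨⟨?_, ?_⟩, ?_, ?_, ?_, ?_⟩
  · -- B equations
    intro i hi
    simp only [Finset.mem_Icc] at hi
    rw [hS, lv2_Psum m r s hQ1 hrne i hi.1 hi.2]
    have hri : r i ≠ 0 := ne_of_gt (hrpos i hi.1 hi.2)
    field_simp
    ring
  · -- P equations
    intro i hi
    simp only [Finset.mem_Icc] at hi
    rcases Nat.lt_or_ge i (m + 1) with h | h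
    · rw [lv2_Bsum_lt m r s i hi.1 (by omega), sub_self, mul_zero]
    · have : i = m + 1 := by omega
      rw [this, lvPdag, if_pos rfl, mul_zero, zero_mul]
  · -- B positivity
    intro i hi
    simp only [Finset.mem_Icc] at hi
    have hB := lv2_Bstar_pos (m+1) s hs1 hs i hi.1 hi.2
    rcases Nat.lt_or_ge i (m + 1) with h | h
    · rw [lvBdag, if_neg (by omega)]; exact hB
    · have : i = m + 1 := by omega
      subst this
      rw [lvBdag, if_pos rfl]
      have : (1 + lvQ r s (m + 1)) / r (m + 1) < 1 := (div_lt_one hrnpos).mpr hQr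
      linarith
  · -- P positivity
    intro i hi hne
    simp only [Finset.mem_Icc] at hi
    rw [lv2_Pdag_eq m r s hQ1 hrne i hi.1 (by omega)]
    have := hr i hi.1 (by omega)
    exact div_pos (by linarith) hrnpos
  · exact if_pos rfl
  · -- uniqueness
    intro B P hB hP hPn hE
    obtain ⟨hEB, hEP⟩ := hE
    have hspos : ∀ k, 1 ≤ k → k ≤ m + 1 → 0 < s k := lv2_spos (m+1) s hs1 hs
    -- cumulative sums of B
    have hcum : ∀ k, 1 ≤ k → k ≤ m → (∑ j ∈ Finset.Icc 1 k, B j) = s k := by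
      intro k h1 h2
      have h := hEP k (Finset.mem_Icc.mpr ⟨h1, by omega⟩)
      have hsk := hspos k h1 (by omega)
      have hPk := hP k (Finset.mem_Icc.mpr ⟨h1, by omega⟩) (by omega)
      rcases mul_eq_zero.mp h with h' | h'
      · rcases mul_eq_zero.mp h' with h'' | h''
        · exact absurd h'' (inv_ne_zero (ne_of_gt hsk))
        · exact absurd h'' (ne_of_gt hPk)
      · linarith
    have hBlt : ∀ k, 1 ≤ k → k ≤ m → B k = lvBstar s k := by
      intro k h1 h2
      rcases Nat.lt_or_ge k 2 with h | h
      · have hk1 : k = 1 := by omega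
        subst hk1
        have := hcum 1 le_rfl h2
        simp only [Finset.Icc_self, Finset.sum_singleton] at this
        rw [this, lvBstar, if_pos rfl]
      · obtain ⟨l, rfl⟩ : ∃ l, k = l + 1 := ⟨k - 1, by omega⟩
        have e1 := hcum (l+1) h1 h2
        have e2 := hcum l (by omega) (by omega)
        rw [Finset.sum_Icc_succ_top (by omega : 1 ≤ l + 1), e2] at e1
        rw [lvBstar, if_neg (by omega)]
        simp only [Nat.add_sub_cancel]
        linarith
    set T := ∑ j ∈ Finset.Icc 1 (m + 1), (B j + s j * P j) with hTdef
    have heq : ∀ i, 1 ≤ i → i ≤ m + 1 →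
        r i * (1 - 1 / r i - T) = ∑ j ∈ Finset.Icc i (m + 1), P j := by
      intro i h1 h2
      have h := hEB i (Finset.mem_Icc.mpr ⟨h1, h2⟩)
      have hBi := hB i (Finset.mem_Icc.mpr ⟨h1, h2⟩)
      have hfac : B i * (r i * (1 - 1 / r i - T) - ∑ j ∈ Finset.Icc i (m + 1), P j) = 0 := by
        rw [← h]; ring
      rcases mul_eq_zero.mp hfac with h' | h'
      · exact absurd h' (ne_of_gt hBi)
      · linarith
    have hT : T = 1 - 1 / r (m + 1) := by
      have h := heq (m+1) (by omega) le_rfl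
      rw [Finset.Icc_self, Finset.sum_singleton, hPn] at h
      have : 1 - 1 / r (m + 1) - T = 0 := by
        rcases mul_eq_zero.mp h with h' | h'
        · exact absurd h' hrne
        · exact h'
      linarith
    have hPval : ∀ i, 1 ≤ i → i ≤ m → P i = (r i - r (i + 1)) / r (m + 1) := by
      intro i h1 h2
      have e1 := heq i h1 (by omega)
      have e2 := heq (i+1) (by omega) (by omega)
      rw [Finset.Icc_eq_cons_Ioc (by omega), Finset.sum_cons, ← Finset.Icc_add_one_left_eq_Ioc] at e1
      have key : P i = r i * (1 - 1 / r i - T) - r (i+1) * (1 - 1 / r (i+1) - T) := by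
        rw [e1, ← e2]; ring
      have hri : r i ≠ 0 := ne_of_gt (hrpos i h1 (by omega))
      have hri1 : r (i+1) ≠ 0 := ne_of_gt (hrpos (i+1) (by omega) (by omega))
      rw [key, hT]
      field_simp
      ring
    have hPall : ∀ i ∈ Finset.Icc 1 (m + 1), P i = lvPdag (m+1) r s i := by
      intro i hi
      simp only [Finset.mem_Icc] at hi
      rcases Nat.lt_or_ge i (m + 1) with h | h
      · rw [hPval i hi.1 (by omega), lv2_Pdag_eq m r s hQ1 hrne i hi.1 (by omega)]
      · have : i = m + 1 := by omega
        rw [this, hPn, lvPdag, if_pos rfl]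
    have hsum_sP : (∑ j ∈ Finset.Icc 1 (m + 1), s j * P j)
        = (lvQ r s (m + 1) - s (m + 1) * r (m + 1)) / r (m + 1) := by
      have hcg : (∑ j ∈ Finset.Icc 1 (m + 1), s j * P j)
          = ∑ j ∈ Finset.Icc 1 (m + 1), s j * lvPdag (m+1) r s j := by
        refine Finset.sum_congr rfl (fun j hj => ?_)
        rw [hPall j hj]
      rw [hcg]
      exact lv2_sPsum m r s hQ1 hrne
    have hTB : (∑ j ∈ Finset.Icc 1 (m + 1), B j)
        = s (m + 1) + (1 - (1 + lvQ r s (m + 1)) / r (m + 1)) := by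
      have hsplit : T = (∑ j ∈ Finset.Icc 1 (m + 1), B j)
          + ∑ j ∈ Finset.Icc 1 (m + 1), s j * P j := by
        rw [hTdef, Finset.sum_add_distrib]
      rw [hT, hsum_sP] at hsplit
      field_simp at hsplit ⊢
      linarith
    have hmid : (∑ j ∈ Finset.Icc 1 m, B j) = ∑ j ∈ Finset.Icc 1 m, lvBdag (m+1) r s j := by
      refine Finset.sum_congr rfl (fun j hj => ?_)
      simp only [Finset.mem_Icc] at hj
      rw [hBlt j hj.1 hj.2, lvBdag, if_neg (by omega)]
    have hBtop : B (m + 1) = lvBdag (m+1) r s (m + 1) := by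
      have e1 : (∑ j ∈ Finset.Icc 1 (m + 1), B j)
          = (∑ j ∈ Finset.Icc 1 m, B j) + B (m + 1) :=
        Finset.sum_Icc_succ_top (by omega) _
      have e4 : (∑ j ∈ Finset.Icc 1 (m + 1), lvBdag (m+1) r s j)
          = (∑ j ∈ Finset.Icc 1 m, lvBdag (m+1) r s j) + lvBdag (m+1) r s (m + 1) :=
        Finset.sum_Icc_succ_top (by omega) _
      have e3 := lv2_Bsum_top m r s
      rw [hmid] at e1
      linarith
    intro i hi
    have hi' := hi
    simp only [Finset.mem_Icc] at hi'
    refine ⟨?_, hPall i hi⟩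
    rcases Nat.lt_or_ge i (m + 1) with h | h
    · rw [hBlt i hi'.1 (by omega), lvBdag, if_neg (by omega)]
    · have : i = m + 1 := by omega
      rw [this]; exact hBtop
end

section
/- Assume the coexistence condition (ss): r_n/(1+Q_n) > 1. Then s_1 < 1 − 1/r_1 and s_i − s_{i−1} < 1 − 1/r_i for every 1 < i ≤ n; that is, each component B_i* of the positive equilibrium is strictly smaller than the single-species equilibrium density 1 − 1/r_i. Moreover P_j† < P_j* for 1 ≤ j < n, and B_n† > B_n*. -/
open Filter

lemma lvQ_eq (r s : ℕ → ℝ) (m : ℕ) :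
    lvQ r s (m + 1) = s 1 * r 1 + ∑ i ∈ Finset.Icc 2 (m + 1), (s i - s (i - 1)) * r i := by
  induction m with
  | zero => simp [lvQ]
  | succ k ih =>
    have h1 : (k + 1 + 1) - 1 = k + 1 := rfl
    have e1 : ∑ i ∈ Finset.Icc 1 (k + 1), s i * (r i - r (i + 1))
        = (∑ i ∈ Finset.Icc 1 k, s i * (r i - r (i + 1))) + s (k+1) * (r (k+1) - r (k+2)) :=
      Finset.sum_Icc_succ_top (by omega) _
    have e2 : ∑ i ∈ Finset.Icc 2 (k + 2), (s i - s (i - 1)) * r i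
        = (∑ i ∈ Finset.Icc 2 (k + 1), (s i - s (i - 1)) * r i) + (s (k+2) - s (k+1)) * r (k+2) :=
      Finset.sum_Icc_succ_top (by omega) _
    simp only [lvQ, h1] at ih ⊢
    rw [e1, e2]
    have : (k + 1 : ℕ) - 1 = k := rfl
    rw [this] at ih
    have h3 : (k + 2 : ℕ) - 1 = k + 1 := rfl
    rw [h3] at *
    linarith [ih]

theorem stmt6
    (n : ℕ) (hn : 1 ≤ n) (r s : ℕ → ℝ)
    (hr : ∀ i, 1 ≤ i → i < n → r (i + 1) < r i) (hrn : 1 < r n)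
    (hs1 : 0 < s 1) (hs : ∀ i, 1 ≤ i → i < n → s i < s (i + 1))
    (hss : 1 < r n / (1 + lvQ r s n)) :
    s 1 < 1 - 1 / r 1 ∧
    (∀ i, 1 < i → i ≤ n → s i - s (i - 1) < 1 - 1 / r i) ∧
    (∀ i ∈ Finset.Icc 1 n, lvBstar s i < 1 - 1 / r i) ∧
    (∀ j, 1 ≤ j → j < n → lvPdag n r s j < lvPstar n r s j) ∧
    lvBstar s n < lvBdag n r s n := by
  -- monotonicity of r
  have hrmono : ∀ i j : ℕ, 1 ≤ i → i ≤ j → j ≤ n → r j ≤ r i := by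
    intro i j hi hij hjn
    induction j with
    | zero => omega
    | succ k ih =>
      rcases Nat.eq_or_lt_of_le hij with h | h
      · rw [← h]
      · have h1 : r (k + 1) < r k := hr k (by omega) (by omega)
        have h2 := ih (by omega) (by omega)
        linarith
  have hrpos : ∀ i : ℕ, 1 ≤ i → i ≤ n → 0 < r i := by
    intro i h1 h2
    have := hrmono i n h1 h2 le_rfl
    linarith
  -- write n = m + 1
  obtain ⟨m, rfl⟩ : ∃ m, n = m + 1 := ⟨n - 1, by omega⟩
  set Q := lvQ r s (m + 1) with hQdef
  set T := ∑ i ∈ Finset.Icc 2 (m + 1), (s i - s (i - 1)) * r i with hTdef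
  have hQeq : Q = s 1 * r 1 + T := lvQ_eq r s m
  -- each term of T is positive
  have hterm : ∀ i ∈ Finset.Icc 2 (m + 1), 0 < (s i - s (i - 1)) * r i := by
    intro i hi
    simp only [Finset.mem_Icc] at hi
    have hsi : s (i - 1) < s i := by
      have := hs (i - 1) (by omega) (by omega)
      have e : i - 1 + 1 = i := by omega
      rwa [e] at this
    exact mul_pos (by linarith) (hrpos i (by omega) hi.2)
  have hTnn : 0 ≤ T := Finset.sum_nonneg fun i hi => le_of_lt (hterm i hi)
  have hr1 : 0 < r 1 := hrpos 1 le_rfl hn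
  have hs1r1 : 0 < s 1 * r 1 := mul_pos hs1 hr1
  have hQpos : 0 < Q := by rw [hQeq]; linarith
  have h1Q : 0 < 1 + Q := by linarith
  have hQlt : 1 + Q < r (m + 1) := by
    have := (one_lt_div h1Q).mp hss
    linarith
  have hrm1 : r (m + 1) ≤ r 1 := hrmono 1 (m + 1) le_rfl (by omega) le_rfl
  -- claim 1
  have c1 : s 1 < 1 - 1 / r 1 := by
    have h : s 1 * r 1 < r 1 - 1 := by rw [hQeq] at hQlt; linarith
    have h2 : s 1 < (r 1 - 1) / r 1 := (lt_div_iff₀ hr1).mpr h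
    rwa [sub_div, div_self (ne_of_gt hr1)] at h2
  -- claim 2
  have c2 : ∀ i, 1 < i → i ≤ m + 1 → s i - s (i - 1) < 1 - 1 / r i := by
    intro i h1 h2
    have hmem : i ∈ Finset.Icc 2 (m + 1) := Finset.mem_Icc.mpr ⟨by omega, h2⟩
    have hle : (s i - s (i - 1)) * r i ≤ T :=
      Finset.single_le_sum (fun j hj => le_of_lt (hterm j hj)) hmem
    have hri : 0 < r i := hrpos i (by omega) h2
    have hrim : r (m + 1) ≤ r i := hrmono i (m + 1) (by omega) h2 le_rfl
    have h : (s i - s (i - 1)) * r i < r i - 1 := by rw [hQeq] at hQlt; linarith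
    have h3 : s i - s (i - 1) < (r i - 1) / r i := (lt_div_iff₀ hri).mpr h
    rwa [sub_div, div_self (ne_of_gt hri)] at h3
  refine ⟨c1, c2, ?_, ?_, ?_⟩
  · intro i hi
    simp only [Finset.mem_Icc] at hi
    unfold lvBstar
    rcases eq_or_ne i 1 with h | h
    · rw [if_pos h, h]; exact c1
    · rw [if_neg h]; exact c2 i (by omega) hi.2
  · intro j hj1 hj2
    have hne : j ≠ m + 1 := by omega
    have hPpos : 0 < lvPstar (m + 1) r s j := by
      unfold lvPstar
      rw [if_neg hne]
      exact div_pos (by linarith [hr j hj1 hj2]) h1Q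
    have hc : (1 + Q) / r (m + 1) < 1 :=
      (div_lt_one (by linarith)).mpr hQlt
    unfold lvPdag
    rw [if_neg hne]
    calc lvPstar (m + 1) r s j * ((1 + Q) / r (m + 1))
        < lvPstar (m + 1) r s j * 1 := by
          apply mul_lt_mul_of_pos_left hc hPpos
      _ = lvPstar (m + 1) r s j := mul_one _
  · unfold lvBdag
    rw [if_pos rfl]
    have hc : (1 + Q) / r (m + 1) < 1 :=
      (div_lt_one (by linarith)).mpr hQlt
    linarith
end

section
/- (Competitive exclusion among virus.) Let (B,P) be a solution of (LV) in Ω and let 1 ≤ i < j ≤ n. If P_i(0) > 0, P_j(0) > 0, and B_k(0) = 0 for all i < k ≤ j, then P_j(t) → 0 as t → ∞. -/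
open Filter

def IsSolutionLV (n : ℕ) (r s : ℕ → ℝ) (B P : ℕ → ℝ → ℝ) : Prop :=
  (∀ i ∈ Finset.Icc 1 n, ∀ t : ℝ, 0 ≤ t →
      HasDerivAt (B i)
        (r i * B i t * (1 - 1 / r i - ∑ j ∈ Finset.Icc 1 n, (B j t + s j * P j t))
          - B i t * ∑ j ∈ Finset.Icc i n, P j t) t) ∧
  (∀ i ∈ Finset.Icc 1 n, ∀ t : ℝ, 0 ≤ t →
      HasDerivAt (P i) ((s i)⁻¹ * P i t * ((∑ j ∈ Finset.Icc 1 i, B j t) - s i)) t) ∧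
  (∀ t : ℝ, 0 ≤ t → (∀ i ∈ Finset.Icc 1 n, 0 ≤ B i t ∧ 0 ≤ P i t) ∧
      (∑ i ∈ Finset.Icc 1 n, (B i t + s i * P i t)) ≤ 1)

lemma odeExp (f : ℝ → ℝ) (hf : Continuous f) (x : ℝ → ℝ)
    (hx : ∀ t, 0 ≤ t → HasDerivAt x (x t * f t) t) :
    ∀ t, 0 ≤ t → x t = x 0 * Real.exp (∫ u in (0:ℝ)..t, f u) := by
  intro t ht
  set F : ℝ → ℝ := fun v => ∫ u in (0:ℝ)..v, f u with hFdef
  have hFd : ∀ u : ℝ, HasDerivAt F (f u) u := fun u =>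
    intervalIntegral.integral_hasDerivAt_right (hf.intervalIntegrable _ _)
      (hf.stronglyMeasurableAtFilter _ _) hf.continuousAt
  have hgd : ∀ u, 0 ≤ u → HasDerivAt (fun v => x v * Real.exp (-(F v))) 0 u := by
    intro u hu
    have h1 := (hx u hu).mul ((hFd u).neg.exp)
    refine h1.congr_deriv ?_
    ring
  have hconst := constant_of_has_deriv_right_zero
    (f := fun v => x v * Real.exp (-(F v))) (a := 0) (b := t)
    (fun u hu => ((hgd u hu.1).continuousAt).continuousWithinAt)
    (fun u hu => (hgd u hu.1).hasDerivWithinAt) t ⟨ht, le_rfl⟩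
  have hF0 : F 0 = 0 := intervalIntegral.integral_same
  simp only [hF0, neg_zero, Real.exp_zero, mul_one] at hconst
  have h2 := congrArg (fun y => y * Real.exp (F t)) hconst
  simp only [mul_assoc, ← Real.exp_add, neg_add_cancel, Real.exp_zero, mul_one] at h2
  exact h2

theorem stmt8
    (n : ℕ) (hn : 1 ≤ n) (r s : ℕ → ℝ)
    (hr : ∀ i, 1 ≤ i → i < n → r (i + 1) < r i) (hrn : 1 < r n)
    (hs1 : 0 < s 1) (hs : ∀ i, 1 ≤ i → i < n → s i < s (i + 1))
    (B P : ℕ → ℝ → ℝ) (hsol : IsSolutionLV n r s B P)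
    (i j : ℕ) (h1i : 1 ≤ i) (hij : i < j) (hjn : j ≤ n)
    (hPi0 : 0 < P i 0) (hPj0 : 0 < P j 0)
    (hB0 : ∀ k, i < k → k ≤ j → B k 0 = 0) :
    Tendsto (P j) atTop (nhds 0) := by
  obtain ⟨hBd, hPd, hΩ⟩ := hsol
  have hin : i ≤ n := le_trans hij.le hjn
  have hi : i ∈ Finset.Icc 1 n := Finset.mem_Icc.mpr ⟨h1i, hin⟩
  have hj : j ∈ Finset.Icc 1 n := Finset.mem_Icc.mpr ⟨by omega, hjn⟩
  -- monotonicity of s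
  have hsm : ∀ a b : ℕ, 1 ≤ a → a < b → b ≤ n → s a < s b := by
    intro a b ha hab hbn
    induction b with
    | zero => omega
    | succ b ih =>
      rcases Nat.lt_succ_iff_lt_or_eq.mp hab with h | h
      · exact lt_trans (ih h (by omega)) (hs b (by omega) (by omega))
      · subst h; exact hs a ha (by omega)
  have hspos : ∀ m : ℕ, 1 ≤ m → m ≤ n → 0 < s m := by
    intro m hm hmn
    rcases Nat.lt_or_ge 1 m with h | h
    · exact lt_trans hs1 (hsm 1 m le_rfl h hmn)
    · have : m = 1 := by omega
      rw [this]; exact hs1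
  have hsi : 0 < s i := hspos i h1i hin
  have hsj : 0 < s j := hspos j (by omega) hjn
  have hsij : s i < s j := hsm i j h1i hij hjn
  -- continuity of extended B, P
  have hBc : ∀ m ∈ Finset.Icc 1 n, Continuous (fun t : ℝ => B m (max t 0)) := by
    intro m hm
    rw [continuous_iff_continuousAt]
    intro t
    have hI : ContinuousAt (fun u : ℝ => max u 0) t :=
      (continuous_id.max continuous_const).continuousAt
    exact ContinuousAt.comp (g := B m) (f := fun u : ℝ => max u 0)
      (hBd m hm (max t 0) (le_max_right _ _)).continuousAt hI
  have hPc : ∀ m ∈ Finset.Icc 1 n, Continuous (fun t : ℝ => P m (max t 0)) := by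
    intro m hm
    rw [continuous_iff_continuousAt]
    intro t
    have hI : ContinuousAt (fun u : ℝ => max u 0) t :=
      (continuous_id.max continuous_const).continuousAt
    exact ContinuousAt.comp (g := P m) (f := fun u : ℝ => max u 0)
      (hPd m hm (max t 0) (le_max_right _ _)).continuousAt hI
  -- intermediate B's stay zero
  have hBzero : ∀ k, i < k → k ≤ j → ∀ t : ℝ, 0 ≤ t → B k t = 0 := by
    intro k hik hkj
    have hk : k ∈ Finset.Icc 1 n := Finset.mem_Icc.mpr ⟨by omega, by omega⟩
    set f : ℝ → ℝ := fun u =>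
      r k * (1 - 1 / r k - ∑ m ∈ Finset.Icc 1 n, (B m (max u 0) + s m * P m (max u 0)))
        - ∑ m ∈ Finset.Icc k n, P m (max u 0) with hfdef
    have hfc : Continuous f := by
      apply Continuous.sub
      · exact continuous_const.mul (continuous_const.sub (continuous_finset_sum _
          (fun m hm => (hBc m hm).add (continuous_const.mul (hPc m hm)))))
      · exact continuous_finset_sum _ (fun m hm => hPc m (by
          rw [Finset.mem_Icc] at hm ⊢; omega))
    have hx : ∀ t : ℝ, 0 ≤ t → HasDerivAt (B k) (B k t * f t) t := by
      intro t ht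
      have h1 := hBd k hk t ht
      have hmax : max t 0 = t := max_eq_left ht
      have heq : B k t * f t =
          r k * B k t * (1 - 1 / r k - ∑ m ∈ Finset.Icc 1 n, (B m t + s m * P m t))
            - B k t * ∑ m ∈ Finset.Icc k n, P m t := by
        simp only [hfdef, hmax]; ring
      rw [heq]
      exact h1
    intro t ht
    rw [odeExp f hfc (B k) hx t ht, hB0 k hik hkj, zero_mul]
  -- sum over Icc 1 j equals sum over Icc 1 i
  have hsum : ∀ t : ℝ, 0 ≤ t →
      (∑ m ∈ Finset.Icc 1 j, B m t) = ∑ m ∈ Finset.Icc 1 i, B m t := by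
    intro t ht
    have hU : Finset.Icc 1 j = Finset.Icc 1 i ∪ Finset.Ioc i j := by
      ext m; simp only [Finset.mem_Icc, Finset.mem_union, Finset.mem_Ioc]; omega
    have hdisj : Disjoint (Finset.Icc 1 i) (Finset.Ioc i j) := by
      rw [Finset.disjoint_left]
      intro m hm hm'
      simp only [Finset.mem_Icc] at hm
      simp only [Finset.mem_Ioc] at hm'
      omega
    rw [hU, Finset.sum_union hdisj]
    have : (∑ m ∈ Finset.Ioc i j, B m t) = 0 := by
      apply Finset.sum_eq_zero
      intro m hm
      rw [Finset.mem_Ioc] at hm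
      exact hBzero m hm.1 hm.2 t ht
    rw [this, add_zero]
  -- the common resource function
  set Q : ℝ → ℝ := fun u => ∑ m ∈ Finset.Icc 1 i, B m (max u 0) with hQdef
  have hQc : Continuous Q := continuous_finset_sum _
    (fun m hm => hBc m (by rw [Finset.mem_Icc] at hm ⊢; omega))
  -- exponential formulas for P i and P j
  have hPeq : ∀ ℓ, ℓ = i ∨ ℓ = j → ∀ t : ℝ, 0 ≤ t →
      P ℓ t = P ℓ 0 * Real.exp ((s ℓ)⁻¹ * ((∫ u in (0:ℝ)..t, Q u) - s ℓ * t)) := by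
    intro ℓ hℓ t ht
    have hℓmem : ℓ ∈ Finset.Icc 1 n := by rcases hℓ with h | h <;> (subst h; assumption)
    set g : ℝ → ℝ := fun u => (s ℓ)⁻¹ * (Q u - s ℓ) with hgdef
    have hgc : Continuous g := continuous_const.mul (hQc.sub continuous_const)
    have hx : ∀ t : ℝ, 0 ≤ t → HasDerivAt (P ℓ) (P ℓ t * g t) t := by
      intro t ht
      have h1 := hPd ℓ hℓmem t ht
      have hmax : max t 0 = t := max_eq_left ht
      have hQt : Q t = ∑ m ∈ Finset.Icc 1 ℓ, B m t := by
        rcases hℓ with h | h <;> subst h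
        · simp only [hQdef, hmax]
        · rw [hsum t ht]; simp only [hQdef, hmax]
      have heq : P ℓ t * g t = (s ℓ)⁻¹ * P ℓ t * ((∑ m ∈ Finset.Icc 1 ℓ, B m t) - s ℓ) := by
        simp only [hgdef, hQt]; ring
      rw [heq]
      exact h1
    have := odeExp g hgc (P ℓ) hx t ht
    rw [this]
    congr 1
    have hQi : IntervalIntegrable Q MeasureTheory.volume 0 t := hQc.intervalIntegrable _ _
    congr 1
    calc (∫ u in (0:ℝ)..t, g u) = (s ℓ)⁻¹ * ∫ u in (0:ℝ)..t, (Q u - s ℓ) := by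
          simp only [hgdef]
          rw [intervalIntegral.integral_const_mul]
      _ = (s ℓ)⁻¹ * ((∫ u in (0:ℝ)..t, Q u) - s ℓ * t) := by
          rw [intervalIntegral.integral_sub hQi intervalIntegrable_const,
            intervalIntegral.integral_const]
          simp [smul_eq_mul, mul_comm]
  -- bound on the integral of Q from the bound on P i
  set A : ℝ → ℝ := fun t => ∫ u in (0:ℝ)..t, Q u with hAdef
  set L : ℝ := Real.log (1 / (s i * P i 0)) with hLdef
  have hAbound : ∀ t : ℝ, 0 ≤ t → A t ≤ s i * t + s i * L := by
    intro t ht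
    have hPbound : s i * P i t ≤ 1 := by
      have h1 := (hΩ t ht).2
      have h2 : B i t + s i * P i t ≤ ∑ m ∈ Finset.Icc 1 n, (B m t + s m * P m t) := by
        apply Finset.single_le_sum (f := fun m => B m t + s m * P m t) _ hi
        intro m hm
        have h3 := (hΩ t ht).1 m hm
        have h4 : 0 < s m := hspos m (Finset.mem_Icc.mp hm).1 (Finset.mem_Icc.mp hm).2
        have h6 := mul_nonneg h4.le h3.2
        show 0 ≤ B m t + s m * P m t
        linarith [h3.1]
      have h5 := ((hΩ t ht).1 i hi).1
      linarith
    have hPi : P i t = P i 0 * Real.exp ((s i)⁻¹ * (A t - s i * t)) :=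
      hPeq i (Or.inl rfl) t ht
    have hexp : Real.exp ((s i)⁻¹ * (A t - s i * t)) ≤ 1 / (s i * P i 0) := by
      rw [le_div_iff₀ (by positivity)]
      calc Real.exp ((s i)⁻¹ * (A t - s i * t)) * (s i * P i 0)
          = s i * (P i 0 * Real.exp ((s i)⁻¹ * (A t - s i * t))) := by ring
        _ = s i * P i t := by rw [← hPi]
        _ ≤ 1 := hPbound
    have hlog : (s i)⁻¹ * (A t - s i * t) ≤ L := by
      rw [hLdef, Real.le_log_iff_exp_le (by positivity)]
      exact hexp
    have := mul_le_mul_of_nonneg_left hlog hsi.le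
    rw [← mul_assoc, mul_inv_cancel₀ hsi.ne', one_mul] at this
    linarith
  -- upper bound for P j
  set c : ℝ := s i / s j - 1 with hcdef
  have hc : c < 0 := by
    rw [hcdef, sub_neg, div_lt_one hsj]
    exact hsij
  have hupper : ∀ t : ℝ, 0 ≤ t → P j t ≤ P j 0 * Real.exp (c * t + (s i / s j) * L) := by
    intro t ht
    rw [hPeq j (Or.inr rfl) t ht]
    apply mul_le_mul_of_nonneg_left _ hPj0.le
    apply Real.exp_le_exp.mpr
    have h1 := hAbound t ht
    have h2 : (s j)⁻¹ * (A t - s j * t) ≤ (s j)⁻¹ * (s i * t + s i * L - s j * t) := by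
      apply mul_le_mul_of_nonneg_left _ (inv_nonneg.mpr hsj.le)
      linarith
    calc (s j)⁻¹ * (A t - s j * t) ≤ (s j)⁻¹ * (s i * t + s i * L - s j * t) := h2
      _ = c * t + (s i / s j) * L := by
          field_simp [hcdef]
          have hsjd : s j * (s i / s j) = s i := mul_div_cancel₀ _ hsj.ne'
          rw [hcdef]
          linear_combination (-t) * hsjd
  -- squeeze
  have hlim : Tendsto (fun t : ℝ => P j 0 * Real.exp (c * t + (s i / s j) * L))
      atTop (nhds 0) := by
    have h1 : Tendsto (fun t : ℝ => c * t + (s i / s j) * L) atTop atBot := by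
      apply tendsto_atBot_add_const_right
      exact (tendsto_const_mul_atBot_of_neg hc).mpr tendsto_id
    have h2 := Real.tendsto_exp_atBot.comp h1
    have h3 := h2.const_mul (P j 0)
    simpa using h3
  apply tendsto_of_tendsto_of_tendsto_of_le_of_le' tendsto_const_nhds hlim
  · filter_upwards [eventually_ge_atTop (0:ℝ)] with t ht
    exact ((hΩ t ht).1 j hj).2
  · filter_upwards [eventually_ge_atTop (0:ℝ)] with t ht
    exact hupper t ht
end

section
/- (Competitive exclusion among bacteria.) Let (B,P) be a solution of (LV) in Ω and let 1 ≤ i < j ≤ n. If B_i(0) > 0, B_j(0) > 0, and P_k(0) = 0 for all i ≤ k < j, then B_j(t) → 0 as t → ∞. -/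
open Filter

theorem stmt9
    (n : ℕ) (hn : 1 ≤ n) (r s : ℕ → ℝ)
    (hr : ∀ i, 1 ≤ i → i < n → r (i + 1) < r i) (hrn : 1 < r n)
    (hs1 : 0 < s 1) (hs : ∀ i, 1 ≤ i → i < n → s i < s (i + 1))
    (B P : ℕ → ℝ → ℝ) (hsol : IsSolutionLV n r s B P)
    (i j : ℕ) (h1i : 1 ≤ i) (hij : i < j) (hjn : j ≤ n)
    (hBi0 : 0 < B i 0) (hBj0 : 0 < B j 0)
    (hP0 : ∀ k, i ≤ k → k < j → P k 0 = 0) :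
    Tendsto (B j) atTop (nhds 0) := by
  obtain ⟨hB', hP', hΩ⟩ := hsol
  -- s is monotone, hence positive on [1,n]
  have smono : ∀ k, 1 ≤ k → k ≤ n → s 1 ≤ s k := by
    intro k hk1 hkn
    induction k with
    | zero => omega
    | succ m ih =>
      rcases Nat.eq_or_lt_of_le hk1 with h | h
      · simp [← h]
      · have hm1 : 1 ≤ m := by omega
        exact (ih hm1 (by omega)).trans (hs m hm1 (by omega)).le
  have spos : ∀ k, 1 ≤ k → k ≤ n → 0 < s k := fun k hk1 hkn =>
    lt_of_lt_of_le hs1 (smono k hk1 hkn)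
  -- r is antitone on [1,n]
  have rmono : ∀ a b, 1 ≤ a → a ≤ b → b ≤ n → r b ≤ r a := by
    intro a b ha hab hbn
    induction b with
    | zero => omega
    | succ m ih =>
      rcases Nat.eq_or_lt_of_le hab with h | h
      · rw [h]
      · have hm : a ≤ m := by omega
        exact (hr m (by omega) (by omega)).le.trans (ih hm (by omega))
  have rgt1 : ∀ k, 1 ≤ k → k ≤ n → 1 < r k := fun k hk1 hkn =>
    lt_of_lt_of_le hrn (rmono k n hk1 hkn le_rfl)
  have hi_mem : i ∈ Finset.Icc 1 n := Finset.mem_Icc.2 ⟨h1i, by omega⟩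
  have hj_mem : j ∈ Finset.Icc 1 n := Finset.mem_Icc.2 ⟨by omega, hjn⟩
  have hri : 1 < r i := rgt1 i h1i (by omega)
  have hrj : 1 < r j := rgt1 j (by omega) hjn
  have hrij : r j < r i :=
    lt_of_le_of_lt (rmono (i+1) j (by omega) (by omega) hjn) (hr i h1i (by omega))
  -- basic bounds on B and P
  have hBnn : ∀ k ∈ Finset.Icc 1 n, ∀ t : ℝ, 0 ≤ t → 0 ≤ B k t := fun k hk t ht =>
    ((hΩ t ht).1 k hk).1
  have hPnn : ∀ k ∈ Finset.Icc 1 n, ∀ t : ℝ, 0 ≤ t → 0 ≤ P k t := fun k hk t ht =>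
    ((hΩ t ht).1 k hk).2
  have hterm_nn : ∀ t : ℝ, 0 ≤ t → ∀ k ∈ Finset.Icc 1 n, 0 ≤ B k t + s k * P k t := by
    intro t ht k hk
    have hk' := Finset.mem_Icc.1 hk
    have := spos k hk'.1 hk'.2
    have := hPnn k hk t ht
    have := hBnn k hk t ht
    positivity
  have hB1 : ∀ k ∈ Finset.Icc 1 n, ∀ t : ℝ, 0 ≤ t → B k t ≤ 1 := by
    intro k hk t ht
    have hk' := Finset.mem_Icc.1 hk
    have h1 : B k t + s k * P k t ≤ ∑ m ∈ Finset.Icc 1 n, (B m t + s m * P m t) :=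
      Finset.single_le_sum (hterm_nn t ht) hk
    have h2 : 0 ≤ s k * P k t :=
      mul_nonneg (spos k hk'.1 hk'.2).le (hPnn k hk t ht)
    linarith [(hΩ t ht).2]
  have hPle : ∀ k ∈ Finset.Icc 1 n, ∀ t : ℝ, 0 ≤ t → P k t ≤ (s 1)⁻¹ := by
    intro k hk t ht
    have hk' := Finset.mem_Icc.1 hk
    have hsk := spos k hk'.1 hk'.2
    have h1 : B k t + s k * P k t ≤ ∑ m ∈ Finset.Icc 1 n, (B m t + s m * P m t) :=
      Finset.single_le_sum (hterm_nn t ht) hk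
    have h2 : 0 ≤ B k t := hBnn k hk t ht
    have h3 : s k * P k t ≤ 1 := by linarith [(hΩ t ht).2]
    have h4 : P k t ≤ (s k)⁻¹ := by
      rw [← one_div, le_div_iff₀ hsk]
      linarith [mul_comm (s k) (P k t)]
    have h5 : (s k)⁻¹ ≤ (s 1)⁻¹ :=
      one_div_le_one_div_of_le hs1 (smono k hk'.1 hk'.2) |>.trans_eq (one_div _) |>.trans_eq' (one_div (s k))
    linarith
  -- P_k vanishes identically for i ≤ k < j
  have hPz : ∀ k, i ≤ k → k < j → ∀ t : ℝ, 0 ≤ t → P k t = 0 := by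
    intro k hik hkj T hT
    have hk : k ∈ Finset.Icc 1 n := Finset.mem_Icc.2 ⟨by omega, by omega⟩
    have hsk : 0 < s k := spos k (by omega) (by omega)
    set K : ℝ := (s k)⁻¹ * (n + s k) with hK
    have hsum_bound : ∀ x : ℝ, 0 ≤ x → |(∑ m ∈ Finset.Icc 1 k, B m x) - s k| ≤ n + s k := by
      intro x hx
      have h1 : ∀ m ∈ Finset.Icc 1 k, 0 ≤ B m x := by
        intro m hm
        have hm' := Finset.mem_Icc.1 hm
        exact hBnn m (Finset.mem_Icc.2 ⟨hm'.1, by omega⟩) x hx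
      have h2 : (∑ m ∈ Finset.Icc 1 k, B m x) ≤ n := by
        calc (∑ m ∈ Finset.Icc 1 k, B m x) ≤ ∑ m ∈ Finset.Icc 1 k, 1 := by
              apply Finset.sum_le_sum
              intro m hm
              have hm' := Finset.mem_Icc.1 hm
              exact hB1 m (Finset.mem_Icc.2 ⟨hm'.1, by omega⟩) x hx
          _ = (k : ℝ) := by simp [Nat.Icc_eq_range', mul_comm]
          _ ≤ n := by exact_mod_cast Nat.cast_le.2 (Finset.mem_Icc.1 hk).2
      have h3 : 0 ≤ ∑ m ∈ Finset.Icc 1 k, B m x := Finset.sum_nonneg h1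
      rw [abs_le]; constructor <;> [linarith [Nat.cast_nonneg (α := ℝ) n]; linarith]
    have key := norm_le_gronwallBound_of_norm_deriv_right_le (f := P k)
      (f' := fun x => (s k)⁻¹ * P k x * ((∑ m ∈ Finset.Icc 1 k, B m x) - s k))
      (δ := 0) (K := K) (ε := 0) (a := 0) (b := T)
      (fun x hx => (hP' k hk x hx.1).continuousAt.continuousWithinAt)
      (fun x hx => (hP' k hk x hx.1).hasDerivWithinAt)
      (by simp [hP0 k hik hkj])
      ?_ T ⟨hT, le_refl T⟩
    · rw [sub_zero, gronwallBound_ε0, zero_mul] at key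
      exact norm_le_zero_iff.1 key
    · intro x hx
      rw [add_zero, Real.norm_eq_abs, Real.norm_eq_abs, abs_mul, abs_mul]
      rw [hK]
      have h1 := hsum_bound x hx.1
      have h2 : |(s k)⁻¹| = (s k)⁻¹ := abs_of_pos (by positivity)
      rw [h2]
      have h3 : 0 ≤ (s k)⁻¹ * |P k x| := by positivity
      calc (s k)⁻¹ * |P k x| * |(∑ m ∈ Finset.Icc 1 k, B m x) - s k|
          ≤ (s k)⁻¹ * |P k x| * (n + s k) := mul_le_mul_of_nonneg_left h1 h3
        _ = (s k)⁻¹ * (n + s k) * |P k x| := by ring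
  -- positivity of B is preserved
  have hBpos : ∀ m ∈ Finset.Icc 1 n, 0 < B m 0 → ∀ t : ℝ, 0 ≤ t → 0 < B m t := by
    intro m hm hBm0 T hT
    have hm' := Finset.mem_Icc.1 hm
    have hrm : 1 < r m := rgt1 m hm'.1 hm'.2
    set K : ℝ := r m + n * (s 1)⁻¹ with hK
    have hvel : ∀ x : ℝ, 0 ≤ x →
        |r m * B m x * (1 - 1 / r m - ∑ k ∈ Finset.Icc 1 n, (B k x + s k * P k x))
          - B m x * ∑ k ∈ Finset.Icc m n, P k x| ≤ K * |B m x| := by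
      intro x hx
      have hSnn : 0 ≤ ∑ k ∈ Finset.Icc 1 n, (B k x + s k * P k x) :=
        Finset.sum_nonneg (hterm_nn x hx)
      have hS1' : (∑ k ∈ Finset.Icc 1 n, (B k x + s k * P k x)) ≤ 1 := (hΩ x hx).2
      have hE : |1 - 1 / r m - ∑ k ∈ Finset.Icc 1 n, (B k x + s k * P k x)| ≤ 1 := by
        have h1 : 0 < 1 / r m := by positivity
        have h2 : 1 / r m ≤ 1 := by
          rw [div_le_one (by linarith)]; linarith
        rw [abs_le]; constructor <;> linarith
      have hQ : |∑ k ∈ Finset.Icc m n, P k x| ≤ n * (s 1)⁻¹ := by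
        have h1 : ∀ k ∈ Finset.Icc m n, 0 ≤ P k x := by
          intro k hk
          have hk' := Finset.mem_Icc.1 hk
          exact hPnn k (Finset.mem_Icc.2 ⟨hm'.1.trans hk'.1, hk'.2⟩) x hx
        rw [abs_of_nonneg (Finset.sum_nonneg h1)]
        calc (∑ k ∈ Finset.Icc m n, P k x) ≤ ∑ k ∈ Finset.Icc m n, (s 1)⁻¹ := by
              apply Finset.sum_le_sum
              intro k hk
              have hk' := Finset.mem_Icc.1 hk
              exact hPle k (Finset.mem_Icc.2 ⟨hm'.1.trans hk'.1, hk'.2⟩) x hx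
          _ = ((Finset.Icc m n).card : ℝ) * (s 1)⁻¹ := by
              rw [Finset.sum_const, nsmul_eq_mul]
          _ ≤ n * (s 1)⁻¹ := by
              apply mul_le_mul_of_nonneg_right _ (by positivity)
              have : (Finset.Icc m n).card ≤ n := by
                rw [Nat.card_Icc]
                omega
              exact_mod_cast this
      have expand : r m * B m x * (1 - 1 / r m - ∑ k ∈ Finset.Icc 1 n, (B k x + s k * P k x))
          - B m x * ∑ k ∈ Finset.Icc m n, P k x
          = B m x * (r m * (1 - 1 / r m - ∑ k ∈ Finset.Icc 1 n, (B k x + s k * P k x))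
              - ∑ k ∈ Finset.Icc m n, P k x) := by ring
      rw [expand, abs_mul, mul_comm (K) (|B m x|)]
      apply mul_le_mul_of_nonneg_left _ (abs_nonneg _)
      calc |r m * (1 - 1 / r m - ∑ k ∈ Finset.Icc 1 n, (B k x + s k * P k x))
              - ∑ k ∈ Finset.Icc m n, P k x|
          ≤ |r m * (1 - 1 / r m - ∑ k ∈ Finset.Icc 1 n, (B k x + s k * P k x))|
            + |∑ k ∈ Finset.Icc m n, P k x| := abs_sub _ _
        _ ≤ r m + n * (s 1)⁻¹ := by
            apply add_le_add _ hQ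
            rw [abs_mul, abs_of_pos (by linarith : (0:ℝ) < r m)]
            calc r m * |1 - 1 / r m - ∑ k ∈ Finset.Icc 1 n, (B k x + s k * P k x)|
                ≤ r m * 1 := mul_le_mul_of_nonneg_left hE (by linarith)
              _ = r m := mul_one _
    set f : ℝ → ℝ := fun u => B m (T - u) with hf
    have hfd : ∀ u ∈ Set.Ico (0:ℝ) T, HasDerivWithinAt f
        ((r m * B m (T-u) * (1 - 1 / r m - ∑ k ∈ Finset.Icc 1 n, (B k (T-u) + s k * P k (T-u)))
          - B m (T-u) * ∑ k ∈ Finset.Icc m n, P k (T-u)) * (-1)) (Set.Ici u) u := by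
      intro u hu
      have h1 : (0:ℝ) ≤ T - u := by simp at hu; linarith [hu.2]
      have h2 : HasDerivAt (fun u : ℝ => T - u) (-1) u := by
        simpa using (hasDerivAt_id u).const_sub T
      exact ((hB' m hm (T - u) h1).comp u h2).hasDerivWithinAt
    have hfc : ContinuousOn f (Set.Icc 0 T) := by
      intro u hu
      have h1 : (0:ℝ) ≤ T - u := by simp at hu; linarith [hu.2]
      have h2 : HasDerivAt (fun u : ℝ => T - u) (-1) u := by
        simpa using (hasDerivAt_id u).const_sub T
      exact ((hB' m hm (T - u) h1).comp u h2).continuousAt.continuousWithinAt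
    have key := norm_le_gronwallBound_of_norm_deriv_right_le (δ := |B m T|) (K := K) (ε := 0)
      hfc hfd (by simp [hf]) ?_ T ⟨hT, le_refl T⟩
    · rw [sub_zero, gronwallBound_ε0] at key
      simp only [hf, sub_self, Real.norm_eq_abs] at key
      by_contra hc
      push_neg at hc
      have hBT : B m T = 0 := le_antisymm hc (hBnn m hm T hT)
      rw [hBT, abs_zero, zero_mul] at key
      rw [abs_of_pos hBm0] at key
      linarith
    · intro u hu
      have h1 : (0:ℝ) ≤ T - u := by simp at hu; linarith [hu.2]
      rw [add_zero, Real.norm_eq_abs, Real.norm_eq_abs, abs_mul, abs_neg, abs_one, mul_one]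
      exact hvel (T - u) h1
  have hBipos : ∀ t : ℝ, 0 ≤ t → 0 < B i t := hBpos i hi_mem hBi0
  have hBjpos : ∀ t : ℝ, 0 ≤ t → 0 < B j t := hBpos j hj_mem hBj0
  -- the main Lyapunov argument
  set S : ℝ → ℝ := fun t => ∑ k ∈ Finset.Icc 1 n, (B k t + s k * P k t) with hS
  set Q : ℝ → ℝ := fun t => ∑ k ∈ Finset.Icc j n, P k t with hQdef
  have hQnn : ∀ t : ℝ, 0 ≤ t → 0 ≤ Q t := by
    intro t ht
    apply Finset.sum_nonneg
    intro k hk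
    have hk' := Finset.mem_Icc.1 hk
    exact hPnn k (Finset.mem_Icc.2 ⟨by omega, hk'.2⟩) t ht
  have hQeq : ∀ t : ℝ, 0 ≤ t → (∑ k ∈ Finset.Icc i n, P k t) = Q t := by
    intro t ht
    rw [hQdef]
    symm
    apply Finset.sum_subset
    · intro x hx
      have hx' := Finset.mem_Icc.1 hx
      exact Finset.mem_Icc.2 ⟨by omega, hx'.2⟩
    · intro x hx hnx
      have hx' := Finset.mem_Icc.1 hx
      have : x < j := by
        by_contra hc
        exact hnx (Finset.mem_Icc.2 ⟨by omega, hx'.2⟩)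
      exact hPz x hx'.1 this t ht
  set L : ℝ → ℝ := fun t => r j * Real.log (B i t) - r i * Real.log (B j t) with hLdef
  set ε : ℝ := r i - r j with hε
  have hεpos : 0 < ε := by rw [hε]; linarith
  have hLderiv : ∀ t : ℝ, 0 ≤ t → HasDerivAt L ((r i - r j) * (1 + Q t)) t := by
    intro t ht
    have hBi := hBipos t ht
    have hBj := hBjpos t ht
    have hlogi : HasDerivAt (fun u => Real.log (B i u))
        ((B i t)⁻¹ * (r i * B i t * (1 - 1 / r i - S t) - B i t * (∑ k ∈ Finset.Icc i n, P k t))) t :=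
      (Real.hasDerivAt_log hBi.ne').comp t (hB' i hi_mem t ht)
    have hlogj : HasDerivAt (fun u => Real.log (B j u))
        ((B j t)⁻¹ * (r j * B j t * (1 - 1 / r j - S t) - B j t * (∑ k ∈ Finset.Icc j n, P k t))) t :=
      (Real.hasDerivAt_log hBj.ne').comp t (hB' j hj_mem t ht)
    have h := ((hlogi.const_mul (r j)).sub (hlogj.const_mul (r i)))
    convert h using 1
    case e'_4 => rfl
    case e'_5 => rfl
    case e'_8 => rfl
    rw [hQeq t ht]
    have hQj : (∑ k ∈ Finset.Icc j n, P k t) = Q t := rfl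
    rw [hQj]
    have hri0 : r i ≠ 0 := by linarith
    have hrj0 : r j ≠ 0 := by linarith
    field_simp
    ring
  set M : ℝ → ℝ := fun t => L t - ε * t with hMdef
  have hMderiv : ∀ t : ℝ, 0 ≤ t → HasDerivAt M ((r i - r j) * Q t) t := by
    intro t ht
    have h := (hLderiv t ht).sub ((hasDerivAt_id t).const_mul ε)
    convert h using 1
    case e'_4 => rfl
    case e'_5 => rfl
    case e'_8 => rfl
    rw [hε]; ring
  have hMmono : MonotoneOn M (Set.Ici (0:ℝ)) := by
    apply monotoneOn_of_deriv_nonneg (convex_Ici 0)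
    · intro x hx
      exact (hMderiv x hx).continuousAt.continuousWithinAt
    · intro x hx
      rw [interior_Ici] at hx
      exact (hMderiv x (le_of_lt hx)).differentiableAt.differentiableWithinAt
    · intro x hx
      rw [interior_Ici] at hx
      rw [(hMderiv x (le_of_lt hx)).deriv]
      have := hQnn x hx.le
      nlinarith
  have hLlb : ∀ t : ℝ, 0 ≤ t → L 0 + ε * t ≤ L t := by
    intro t ht
    have := hMmono (Set.self_mem_Ici) (Set.mem_Ici.2 ht) ht
    simp only [hMdef] at this
    simp only [mul_zero, sub_zero] at this
    linarith
  have hupper : ∀ t : ℝ, 0 ≤ t → B j t ≤ Real.exp ((-(L 0) - ε * t) / r i) := by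
    intro t ht
    have hBj := hBjpos t ht
    have hBi := hBipos t ht
    have hlogBi : Real.log (B i t) ≤ 0 := Real.log_nonpos hBi.le (hB1 i hi_mem t ht)
    have h2 : r j * Real.log (B i t) ≤ 0 :=
      mul_nonpos_of_nonneg_of_nonpos (by linarith) hlogBi
    have h3 : Real.log (B j t) ≤ (-(L 0) - ε * t) / r i := by
      rw [le_div_iff₀ (by linarith : (0:ℝ) < r i)]
      have h4 := hLlb t ht
      have h5 : L t = r j * Real.log (B i t) - r i * Real.log (B j t) := rfl
      nlinarith
    calc B j t = Real.exp (Real.log (B j t)) := (Real.exp_log hBj).symm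
      _ ≤ Real.exp ((-(L 0) - ε * t) / r i) := Real.exp_le_exp.2 h3
  have hg : Tendsto (fun t : ℝ => Real.exp ((-(L 0) - ε * t) / r i)) atTop (nhds 0) := by
    apply Real.tendsto_exp_atBot.comp
    apply Tendsto.atBot_div_const (by linarith : (0:ℝ) < r i)
    have h1 : Tendsto (fun t : ℝ => ε * t) atTop atTop :=
      Tendsto.const_mul_atTop hεpos tendsto_id
    have h2 : Tendsto (fun t : ℝ => -(ε * t)) atTop atBot := by
      simpa using h1
    have h3 := tendsto_atBot_add_const_left atTop (-(L 0)) h2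
    simpa [sub_eq_add_neg] using h3
  apply squeeze_zero' (Filter.Eventually.mono (eventually_ge_atTop (0:ℝ)) ?_)
    (Filter.Eventually.mono (eventually_ge_atTop (0:ℝ)) ?_) hg
  · intro t ht; exact (hBjpos t ht).le
  · intro t ht; exact hupper t ht
end

section
/- Let (B,P) be a solution of (LV) in Ω and set U(t) = Σ_{i=1}^n (B_i(t) + s_i P_i(t)) and W(t) = Σ_{i=1}^n r_i B_i(t). Then limsup_{t→∞} U(t) ≤ W^∞/(1 + W^∞) ≤ r_1/(1 + r_1), where W^∞ = limsup_{t→∞} W(t). -/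
open Filter

theorem stmt10
    (n : ℕ) (hn : 1 ≤ n) (r s : ℕ → ℝ)
    (hr : ∀ i, 1 ≤ i → i < n → r (i + 1) < r i) (hrn : 1 < r n)
    (hs1 : 0 < s 1) (hs : ∀ i, 1 ≤ i → i < n → s i < s (i + 1))
    (B P : ℕ → ℝ → ℝ) (hsol : IsSolutionLV n r s B P) :
    limsup (fun t => ∑ i ∈ Finset.Icc 1 n, (B i t + s i * P i t)) atTop ≤
      (limsup (fun t => ∑ i ∈ Finset.Icc 1 n, r i * B i t) atTop) /
        (1 + limsup (fun t => ∑ i ∈ Finset.Icc 1 n, r i * B i t) atTop) ∧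
    (limsup (fun t => ∑ i ∈ Finset.Icc 1 n, r i * B i t) atTop) /
        (1 + limsup (fun t => ∑ i ∈ Finset.Icc 1 n, r i * B i t) atTop) ≤
      r 1 / (1 + r 1) := by
  obtain ⟨hB, hP, hΩ⟩ := hsol
  set U : ℝ → ℝ := fun t => ∑ i ∈ Finset.Icc 1 n, (B i t + s i * P i t) with hUdef
  set W : ℝ → ℝ := fun t => ∑ i ∈ Finset.Icc 1 n, r i * B i t with hWdef
  have hUt : ∀ t, U t = ∑ i ∈ Finset.Icc 1 n, (B i t + s i * P i t) := fun t => rfl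
  have hWt : ∀ t, W t = ∑ i ∈ Finset.Icc 1 n, r i * B i t := fun t => rfl
  -- monotonicity of r and s
  have hr' : ∀ j, j ≤ n → ∀ i, 1 ≤ i → i ≤ j → r j ≤ r i := by
    intro j
    induction j with
    | zero => intro _ i hi hij; omega
    | succ k ih =>
      intro hk i hi hij
      rcases eq_or_lt_of_le hij with heq | hlt
      · rw [heq]
      · have hik : i ≤ k := by omega
        have h1 : r (k + 1) < r k := hr k (by omega) (by omega)
        exact le_trans h1.le (ih (by omega) i hi hik)
  have hs' : ∀ j, j ≤ n → ∀ i, 1 ≤ i → i ≤ j → s i ≤ s j := by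
    intro j
    induction j with
    | zero => intro _ i hi hij; omega
    | succ k ih =>
      intro hk i hi hij
      rcases eq_or_lt_of_le hij with heq | hlt
      · rw [heq]
      · have hik : i ≤ k := by omega
        have h1 : s k < s (k + 1) := hs k (by omega) (by omega)
        exact le_trans (ih (by omega) i hi hik) h1.le
  have hrpos : ∀ i ∈ Finset.Icc 1 n, 1 < r i := by
    intro i hi
    rw [Finset.mem_Icc] at hi
    exact lt_of_lt_of_le hrn (hr' n le_rfl i hi.1 hi.2)
  have hspos : ∀ i ∈ Finset.Icc 1 n, 0 < s i := by
    intro i hi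
    rw [Finset.mem_Icc] at hi
    exact lt_of_lt_of_le hs1 (hs' i (hi.2) 1 le_rfl hi.1)
  have hr1 : 1 < r 1 := hrpos 1 (Finset.mem_Icc.mpr ⟨le_rfl, hn⟩)
  have hrle1 : ∀ i ∈ Finset.Icc 1 n, r i ≤ r 1 := by
    intro i hi
    rw [Finset.mem_Icc] at hi
    exact hr' i hi.2 1 le_rfl hi.1
  -- pointwise facts
  have hUle1 : ∀ t, 0 ≤ t → U t ≤ 1 := fun t ht => (hΩ t ht).2
  have hU0 : ∀ t, 0 ≤ t → 0 ≤ U t := by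
    intro t ht
    rw [hUt]
    refine Finset.sum_nonneg fun i hi => ?_
    obtain ⟨hb, hp⟩ := (hΩ t ht).1 i hi
    have := hspos i hi
    positivity
  have hW0 : ∀ t, 0 ≤ t → 0 ≤ W t := by
    intro t ht
    rw [hWt]
    refine Finset.sum_nonneg fun i hi => ?_
    obtain ⟨hb, _⟩ := (hΩ t ht).1 i hi
    have := hrpos i hi
    nlinarith
  have hWle : ∀ t, 0 ≤ t → W t ≤ r 1 := by
    intro t ht
    have h1 : W t ≤ r 1 * U t := by
      rw [hWt, hUt, Finset.mul_sum]
      refine Finset.sum_le_sum fun i hi => ?_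
      obtain ⟨hb, hp⟩ := (hΩ t ht).1 i hi
      have h2 := hrle1 i hi
      have h3 := hspos i hi
      nlinarith [mul_le_mul_of_nonneg_right h2 hb,
        mul_nonneg (mul_nonneg (by linarith : (0:ℝ) ≤ r 1) h3.le) hp]
    nlinarith [hUle1 t ht, hU0 t ht]
  -- the derivative of U
  have hU' : ∀ t, 0 ≤ t → HasDerivAt U (W t * (1 - U t) - U t) t := by
    intro t ht
    have h1 : HasDerivAt U (∑ i ∈ Finset.Icc 1 n,
        ((r i * B i t * (1 - 1 / r i - ∑ j ∈ Finset.Icc 1 n, (B j t + s j * P j t))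
          - B i t * ∑ j ∈ Finset.Icc i n, P j t)
          + s i * ((s i)⁻¹ * P i t * ((∑ j ∈ Finset.Icc 1 i, B j t) - s i)))) t := by
      rw [hUdef]
      exact HasDerivAt.fun_sum fun i hi => ((hB i hi t ht).add ((hP i hi t ht).const_mul (s i)))
    have hswap : ∑ i ∈ Finset.Icc 1 n, B i t * ∑ j ∈ Finset.Icc i n, P j t
        = ∑ i ∈ Finset.Icc 1 n, P i t * ∑ j ∈ Finset.Icc 1 i, B j t := by
      simp_rw [Finset.mul_sum]
      rw [Finset.sum_comm' (s' := fun j => Finset.Icc 1 j) (t' := Finset.Icc 1 n)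
        (f := fun i j => B i t * P j t) (by intro x y; simp only [Finset.mem_Icc]; omega)]
      exact Finset.sum_congr rfl fun j _ => Finset.sum_congr rfl fun i _ => mul_comm _ _
    have heq : (∑ i ∈ Finset.Icc 1 n,
        ((r i * B i t * (1 - 1 / r i - ∑ j ∈ Finset.Icc 1 n, (B j t + s j * P j t))
          - B i t * ∑ j ∈ Finset.Icc i n, P j t)
          + s i * ((s i)⁻¹ * P i t * ((∑ j ∈ Finset.Icc 1 i, B j t) - s i))))
        = W t * (1 - U t) - U t := by
      have step1 : ∀ i ∈ Finset.Icc 1 n,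
          ((r i * B i t * (1 - 1 / r i - ∑ j ∈ Finset.Icc 1 n, (B j t + s j * P j t))
            - B i t * ∑ j ∈ Finset.Icc i n, P j t)
            + s i * ((s i)⁻¹ * P i t * ((∑ j ∈ Finset.Icc 1 i, B j t) - s i)))
          = (r i * B i t) * (1 - ∑ j ∈ Finset.Icc 1 n, (B j t + s j * P j t))
            - (B i t + s i * P i t)
            - (B i t * ∑ j ∈ Finset.Icc i n, P j t - P i t * ∑ j ∈ Finset.Icc 1 i, B j t) := by
        intro i hi
        have h2 : r i ≠ 0 := by have := hrpos i hi; linarith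
        have h3 : s i ≠ 0 := by have := hspos i hi; linarith
        field_simp
        ring
      rw [Finset.sum_congr rfl step1, Finset.sum_sub_distrib, Finset.sum_sub_distrib,
        Finset.sum_sub_distrib, hswap, ← Finset.sum_mul, ← hUt, ← hWt]
      ring
    rw [heq] at h1
    exact h1
  -- limsup facts
  set L : ℝ := limsup W atTop with hLdef
  have hWbdd : IsBoundedUnder (· ≤ ·) atTop W :=
    isBoundedUnder_of_eventually_le ((eventually_ge_atTop 0).mono hWle)
  have hWcobdd : IsCoboundedUnder (· ≤ ·) atTop W :=
    isCoboundedUnder_le_of_eventually_le atTop ((eventually_ge_atTop 0).mono hW0)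
  have hL0 : 0 ≤ L :=
    le_limsup_of_frequently_le (((eventually_ge_atTop 0).mono hW0).frequently) hWbdd
  have hLr : L ≤ r 1 := limsup_le_of_le hWcobdd ((eventually_ge_atTop 0).mono hWle)
  have hUcobdd : IsCoboundedUnder (· ≤ ·) atTop U :=
    isCoboundedUnder_le_of_eventually_le atTop ((eventually_ge_atTop 0).mono hU0)
  have hmain : limsup U atTop ≤ L / (1 + L) := by
    refine le_of_forall_pos_le_add fun ε hε => ?_
    set w : ℝ := L + ε / 2 with hwdef
    have hLw : L < w := by rw [hwdef]; linarith
    have hw0 : 0 ≤ w := by rw [hwdef]; linarith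
    have hl : (0:ℝ) < 1 + w := by linarith
    set a : ℝ := w / (1 + w) with hadef
    have ha0 : 0 ≤ a := by positivity
    -- eventually W < w
    obtain ⟨T0, hT0⟩ := eventually_atTop.mp (eventually_lt_of_limsup_lt hLw hWbdd)
    set T : ℝ := max T0 0 with hTdef
    have hT0' : (0:ℝ) ≤ T := le_max_right _ _
    set g : ℝ → ℝ := fun t => (U t - a) * Real.exp ((1 + w) * t) with hgdef
    have hg : ∀ t ∈ Set.Ici T, HasDerivAt g
        ((W t * (1 - U t) - U t) * Real.exp ((1 + w) * t)
          + (U t - a) * (Real.exp ((1 + w) * t) * ((1 + w) * 1))) t := by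
      intro t ht
      have ht0 : (0:ℝ) ≤ t := le_trans hT0' ht
      exact ((hU' t ht0).sub_const a).mul (((hasDerivAt_id t).const_mul (1 + w)).exp)
    have hanti : AntitoneOn g (Set.Ici T) := by
      have hcont : ContinuousOn g (Set.Ici T) :=
        fun t ht => (hg t ht).continuousAt.continuousWithinAt
      have hdnp : ∀ t ∈ interior (Set.Ici T), deriv g t ≤ 0 := by
        intro t ht
        rw [interior_Ici] at ht
        have ht' : t ∈ Set.Ici T := Set.mem_Ici.mpr (le_of_lt (Set.mem_Ioi.mp ht))
        rw [(hg t ht').deriv]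
        have ht0 : (0:ℝ) ≤ t := le_trans hT0' ht'
        have hWw : W t < w := hT0 t (le_trans (le_max_left _ _) ht'.out)
        have hU1 : U t ≤ 1 := hUle1 t ht0
        have hexp : (0:ℝ) < Real.exp ((1 + w) * t) := Real.exp_pos _
        have key : (W t * (1 - U t) - U t) + (U t - a) * (1 + w) = (W t - w) * (1 - U t) := by
          rw [hadef]; field_simp; ring
        nlinarith [mul_nonneg (sub_nonneg.mpr hU1) (sub_nonneg.mpr hWw.le)]
      exact antitoneOn_of_deriv_nonpos (convex_Ici T) hcont
        (fun t ht => (hg t (interior_subset ht)).differentiableAt.differentiableWithinAt) hdnp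
    -- consequence: U t ≤ a + C * exp (-(1+w) t)
    set C : ℝ := Real.exp ((1 + w) * T) with hCdef
    have hbound : ∀ t, T ≤ t → U t ≤ a + C * Real.exp (-((1 + w) * t)) := by
      intro t ht
      have h1 : g t ≤ g T := hanti (Set.self_mem_Ici) ht ht
      have h2 : g T ≤ C := by
        show (U T - a) * Real.exp ((1 + w) * T) ≤ Real.exp ((1 + w) * T)
        have := hUle1 T hT0'
        nlinarith [Real.exp_pos ((1 + w) * T)]
      have h3 : (U t - a) * Real.exp ((1 + w) * t) ≤ C := le_trans h1 h2
      have hexp : (0:ℝ) < Real.exp ((1 + w) * t) := Real.exp_pos _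
      rw [Real.exp_neg]
      rw [← le_div_iff₀ hexp] at h3
      rw [div_eq_mul_inv] at h3
      linarith
    have htend : Tendsto (fun t => C * Real.exp (-((1 + w) * t))) atTop (nhds 0) := by
      rw [show (0:ℝ) = C * 0 by ring]
      exact (Real.tendsto_exp_atBot.comp
        (tendsto_neg_atBot_iff.mpr (tendsto_atTop_atTop_of_monotone
          (fun x y hxy => by nlinarith) (fun b => ⟨max 0 (b / (1 + w)), by
            have := le_max_right 0 (b / (1 + w))
            rw [div_le_iff₀ hl] at this
            linarith [this]⟩)))).const_mul C
    have hev : ∀ᶠ t in atTop, U t ≤ a + ε / 2 := by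
      have h4 : ∀ᶠ t in atTop, C * Real.exp (-((1 + w) * t)) < ε / 2 :=
        htend.eventually (gt_mem_nhds (by positivity : (0:ℝ) < ε / 2))
      filter_upwards [eventually_ge_atTop T, h4] with t h5 h6
      linarith [hbound t h5]
    have h7 : limsup U atTop ≤ a + ε / 2 := limsup_le_of_le hUcobdd hev
    have h8 : a ≤ L / (1 + L) + ε / 2 := by
      rw [hadef, hwdef]
      rw [div_add' _ _ _ (by linarith : (1:ℝ) + L ≠ 0), div_le_div_iff₀ (by linarith) (by linarith)]
      nlinarith [mul_nonneg hL0 hε.le, sq_nonneg ε, mul_nonneg (mul_nonneg hL0 hL0) hε.le,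
        mul_nonneg (mul_nonneg hL0 hε.le) hε.le]
    linarith
  refine ⟨hmain, ?_⟩
  rw [div_le_div_iff₀ (by linarith) (by linarith)]
  nlinarith
end

section
/- Assume the coexistence condition (ss): r_n/(1+Q_n) > 1. Let (B,P) be a solution of (LV) in Ω and let 1 ≤ i ≤ n. If P_i(0) > 0, then liminf_{t→∞} Σ_{j=1}^i B_j(t) ≤ s_i. -/
open Filter

private lemma monoAux {f g : ℝ → ℝ} {a : ℝ} (hf : ∀ t, a ≤ t → HasDerivAt f (g t) t)
    (hg : ∀ t, a ≤ t → 0 ≤ g t) : MonotoneOn f (Set.Ici a) := by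
  apply monotoneOn_of_deriv_nonneg (convex_Ici a)
  · exact fun t ht => (hf t ht).continuousAt.continuousWithinAt
  · intro t ht
    rw [interior_Ici] at ht
    exact ((hf t ht.le).differentiableAt).differentiableWithinAt
  · intro t ht
    rw [interior_Ici] at ht
    rw [(hf t ht.le).deriv]
    exact hg t ht.le

theorem stmt11
    (n : ℕ) (hn : 1 ≤ n) (r s : ℕ → ℝ)
    (hr : ∀ i, 1 ≤ i → i < n → r (i + 1) < r i) (hrn : 1 < r n)
    (hs1 : 0 < s 1) (hs : ∀ i, 1 ≤ i → i < n → s i < s (i + 1))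
    (hss : 1 < r n / (1 + lvQ r s n))
    (B P : ℕ → ℝ → ℝ) (hsol : IsSolutionLV n r s B P)
    (i : ℕ) (h1i : 1 ≤ i) (hin : i ≤ n) (hPi0 : 0 < P i 0) :
    liminf (fun t => ∑ j ∈ Finset.Icc 1 i, B j t) atTop ≤ s i := by
  classical
  obtain ⟨hB', hP', hΩ⟩ := hsol
  -- positivity of s on [1, n]
  have spos : ∀ j, 1 ≤ j → j ≤ n → 0 < s j := by
    intro j h1 hjn
    induction j, h1 using Nat.le_induction with
    | base => exact hs1
    | succ j hj ih => exact lt_trans (ih (by omega)) (hs j hj (by omega))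
  have hsi : 0 < s i := spos i h1i hin
  have himem : i ∈ Finset.Icc 1 n := Finset.mem_Icc.2 ⟨h1i, hin⟩
  set S : ℝ → ℝ := fun t => ∑ j ∈ Finset.Icc 1 i, B j t with hSdef
  have hSnonneg : ∀ t, 0 ≤ t → 0 ≤ S t := by
    intro t ht
    apply Finset.sum_nonneg
    intro j hj
    obtain ⟨hj1, hj2⟩ := Finset.mem_Icc.1 hj
    exact ((hΩ t ht).1 j (Finset.mem_Icc.2 ⟨hj1, le_trans hj2 hin⟩)).1
  have hPle : ∀ t, 0 ≤ t → P i t ≤ (s i)⁻¹ := by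
    intro t ht
    have h1 := (hΩ t ht).2
    have h2 : s i * P i t ≤ ∑ j ∈ Finset.Icc 1 n, (B j t + s j * P j t) := by
      have hterm : ∀ j ∈ Finset.Icc 1 n, 0 ≤ B j t + s j * P j t := by
        intro j hj
        obtain ⟨hj1, hj2⟩ := Finset.mem_Icc.1 hj
        have hB0 := ((hΩ t ht).1 j hj).1
        have hP0 := ((hΩ t ht).1 j hj).2
        have := (spos j hj1 hj2).le
        nlinarith
      have hsingle := Finset.single_le_sum hterm himem
      have hBi := ((hΩ t ht).1 i himem).1
      linarith
    have h3 : s i * P i t ≤ 1 := le_trans h2 h1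
    have h4 : P i t ≤ 1 / s i := (le_div_iff₀ hsi).2 (by linarith)
    rwa [one_div] at h4
  -- P i stays positive
  have hgpos : ∀ t, 0 ≤ t → HasDerivAt (fun u => P i u * Real.exp u)
      ((s i)⁻¹ * P i t * (S t - s i) * Real.exp t + P i t * Real.exp t) t := by
    intro t ht
    exact (hP' i himem t ht).mul (Real.hasDerivAt_exp t)
  have hgnn : ∀ t, 0 ≤ t →
      0 ≤ (s i)⁻¹ * P i t * (S t - s i) * Real.exp t + P i t * Real.exp t := by
    intro t ht
    have hid : (s i)⁻¹ * P i t * (S t - s i) * Real.exp t + P i t * Real.exp t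
        = (s i)⁻¹ * (P i t * Real.exp t * S t) := by
      field_simp
      ring
    rw [hid]
    have hP0 := ((hΩ t ht).1 i himem).2
    have hS0 := hSnonneg t ht
    have he := (Real.exp_pos t).le
    positivity
  have hmono0 : MonotoneOn (fun u => P i u * Real.exp u) (Set.Ici (0 : ℝ)) :=
    monoAux hgpos hgnn
  have hPpos : ∀ t, 0 ≤ t → 0 < P i t := by
    intro t ht
    have hle := hmono0 (Set.mem_Ici.2 le_rfl) (Set.mem_Ici.2 ht) ht
    simp only [Real.exp_zero, mul_one] at hle
    have he := Real.exp_pos t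
    have hP0 := ((hΩ t ht).1 i himem).2
    nlinarith
  -- main argument by contradiction
  by_contra hcon
  push_neg at hcon
  have hbdd : IsBoundedUnder (· ≥ ·) atTop S :=
    ⟨0, eventually_map.2 (by
      filter_upwards [eventually_ge_atTop (0 : ℝ)] with t ht using hSnonneg t ht)⟩
  obtain ⟨c, hsic, hcL⟩ := exists_between hcon
  have hev : ∀ᶠ t in atTop, c < S t := eventually_lt_of_lt_liminf hcL hbdd
  obtain ⟨T0, hT0⟩ := eventually_atTop.1 hev
  set T : ℝ := max T0 0 with hTdef
  have hT0le : (0 : ℝ) ≤ T := le_max_right _ _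
  have hST : ∀ t, T ≤ t → c < S t := fun t ht => hT0 t (le_trans (le_max_left _ _) ht)
  set k : ℝ := (c - s i) / s i with hkdef
  have hk : 0 < k := div_pos (by linarith) hsi
  have hgT : ∀ t, T ≤ t → HasDerivAt (fun u => P i u * Real.exp (-(k * u)))
      ((s i)⁻¹ * P i t * (S t - s i) * Real.exp (-(k * t))
        + P i t * (Real.exp (-(k * t)) * -k)) t := by
    intro t ht
    have he : HasDerivAt (fun u : ℝ => Real.exp (-(k * u))) (Real.exp (-(k * t)) * -k) t := by
      have h1 : HasDerivAt (fun u : ℝ => -(k * u)) (-k) t := by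
        simpa [Pi.neg_def] using (((hasDerivAt_id t).const_mul k).neg)
      exact h1.exp
    exact (hP' i himem t (le_trans hT0le ht)).mul he
  have hgTnn : ∀ t, T ≤ t →
      0 ≤ (s i)⁻¹ * P i t * (S t - s i) * Real.exp (-(k * t))
        + P i t * (Real.exp (-(k * t)) * -k) := by
    intro t ht
    have hid : (s i)⁻¹ * P i t * (S t - s i) * Real.exp (-(k * t))
        + P i t * (Real.exp (-(k * t)) * -k)
        = Real.exp (-(k * t)) * P i t * ((S t - c) / s i) := by
      rw [hkdef]
      field_simp
      ring
    rw [hid]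
    have hP0 := ((hΩ t (le_trans hT0le ht)).1 i himem).2
    have hSt := hST t ht
    have he := (Real.exp_pos (-(k * t))).le
    have hnum : 0 ≤ (S t - c) / s i := div_nonneg (by linarith) hsi.le
    positivity
  have hmonoT : MonotoneOn (fun u => P i u * Real.exp (-(k * u))) (Set.Ici T) :=
    monoAux hgT hgTnn
  have hPT : 0 < P i T := hPpos T hT0le
  have hgrow : Tendsto (fun t => (P i T * Real.exp (-(k * T))) * Real.exp (k * t)) atTop atTop := by
    apply Tendsto.const_mul_atTop (by positivity)
    exact Real.tendsto_exp_atTop.comp (Tendsto.const_mul_atTop hk tendsto_id)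
  obtain ⟨t, hgt, htT⟩ :=
    ((hgrow.eventually_gt_atTop ((s i)⁻¹)).and (eventually_ge_atTop T)).exists
  have hmt := hmonoT (Set.mem_Ici.2 (le_refl T)) (Set.mem_Ici.2 htT) htT
  have hmul := mul_le_mul_of_nonneg_right hmt (Real.exp_pos (k * t)).le
  have hval : P i t * Real.exp (-(k * t)) * Real.exp (k * t) = P i t := by
    rw [mul_assoc, ← Real.exp_add]
    simp
  rw [hval] at hmul
  beta_reduce at hmul
  have hfin := hPle t (le_trans hT0le htT)
  linarith
end

section
/- Assume the coexistence condition (ss): r_n/(1+Q_n) > 1. Let (B,P) be a solution of (LV) in Ω. If B_1(0) > 0 and P_n(0) > 0, then r_1 − 1 − r_1 s_n > 0 and limsup_{t→∞} Σ_{j=1}^n (r_1 s_j + 1) P_j(t) ≥ r_1 − 1 − r_1 s_n. -/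
open Filter Set

/-- Positivity preservation for a linear ODE f' = g f with g continuous on [0,∞). -/
lemma ode_pos (f g : ℝ → ℝ) (hg : ∀ t : ℝ, 0 ≤ t → ContinuousAt g t)
    (hf : ∀ t : ℝ, 0 ≤ t → HasDerivAt f (g t * f t) t) (h0 : 0 < f 0) :
    ∀ t : ℝ, 0 ≤ t → 0 < f t := by
  set g' : ℝ → ℝ := fun u => g (max u 0) with hg'def
  have hgc : Continuous g' := by
    rw [continuous_iff_continuousAt]
    intro u
    have hm : ContinuousAt (fun u : ℝ => max u 0) u :=
      (continuous_id.max continuous_const).continuousAt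
    have hc : ContinuousAt (g ∘ (fun u : ℝ => max u 0)) u :=
      ContinuousAt.comp (hg _ (le_max_right u 0)) hm
    exact hc
  set G : ℝ → ℝ := fun t => ∫ x in (0:ℝ)..t, g' x with hGdef
  have hG : ∀ t : ℝ, HasDerivAt G (g' t) t := fun t =>
    (hgc.integral_hasStrictDerivAt 0 t).hasDerivAt
  set F : ℝ → ℝ := fun t => f t * Real.exp (-G t) with hFdef
  have hF : ∀ t : ℝ, 0 ≤ t → HasDerivAt F 0 t := by
    intro t ht
    have h1 := (hf t ht).mul ((hG t).neg.exp)
    have hgt : g' t = g t := by simp [hg'def, max_eq_left ht]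
    exact h1.congr_deriv (by rw [hgt]; ring)
  have hconst : ∀ b : ℝ, 0 ≤ b → F b = F 0 := by
    intro b hb
    rcases eq_or_lt_of_le hb with h | h
    · rw [← h]
    · have := constant_of_has_deriv_right_zero (f := F) (a := 0) (b := b)
        (fun x hx => (hF x hx.1).continuousAt.continuousWithinAt)
        (fun x hx => (hF x hx.1).hasDerivWithinAt)
      exact this b ⟨hb, le_refl b⟩
  intro t ht
  have h1 : F t = F 0 := hconst t ht
  have h2 : F 0 = f 0 * Real.exp (-G 0) := rfl
  have h3 : 0 < F 0 := by rw [h2]; positivity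
  have h4 : 0 < f t * Real.exp (-G t) := by
    have : F t = f t * Real.exp (-G t) := rfl
    rw [← this, h1]; exact h3
  nlinarith [Real.exp_pos (-G t)]

/-- Linear growth from below for a function with derivative ≥ δ on [T,∞). -/
lemma ode_grow (W w : ℝ → ℝ) (T δ : ℝ)
    (hW : ∀ t : ℝ, T ≤ t → HasDerivAt W (w t) t)
    (hw : ∀ t : ℝ, T ≤ t → δ ≤ w t) :
    ∀ t : ℝ, T ≤ t → W T + δ * (t - T) ≤ W t := by
  intro t ht
  set V : ℝ → ℝ := fun u => W u - δ * u with hVdef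
  have hV : ∀ u : ℝ, T ≤ u → HasDerivAt V (w u - δ) u := by
    intro u hu
    have : HasDerivAt (fun u : ℝ => δ * u) (δ * 1) u := (hasDerivAt_id u).const_mul δ
    exact ((hW u hu).sub this).congr_deriv (by ring)
  have hmono : MonotoneOn V (Ici T) := by
    apply monotoneOn_of_deriv_nonneg (convex_Ici T)
    · intro x hx; exact (hV x hx).continuousAt.continuousWithinAt
    · intro x hx
      rw [interior_Ici] at hx
      exact ((hV x (le_of_lt hx)).differentiableAt).differentiableWithinAt
    · intro x hx
      rw [interior_Ici] at hx
      rw [(hV x (le_of_lt hx)).deriv]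
      have := hw x (le_of_lt hx)
      linarith
  have := hmono (self_mem_Ici) (mem_Ici.mpr ht) ht
  simp only [hVdef] at this
  linarith

set_option maxHeartbeats 2000000 in
theorem stmt12
    (n : ℕ) (hn : 1 ≤ n) (r s : ℕ → ℝ)
    (hr : ∀ i, 1 ≤ i → i < n → r (i + 1) < r i) (hrn : 1 < r n)
    (hs1 : 0 < s 1) (hs : ∀ i, 1 ≤ i → i < n → s i < s (i + 1))
    (hss : 1 < r n / (1 + lvQ r s n))
    (B P : ℕ → ℝ → ℝ) (hsol : IsSolutionLV n r s B P)
    (hB10 : 0 < B 1 0) (hPn0 : 0 < P n 0) :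
    0 < r 1 - 1 - r 1 * s n ∧
    r 1 - 1 - r 1 * s n ≤
      limsup (fun t => ∑ j ∈ Finset.Icc 1 n, (r 1 * s j + 1) * P j t) atTop := by
  obtain ⟨hBode, hPode, hΩ⟩ := hsol
  have h1n : 1 ∈ Finset.Icc 1 n := Finset.mem_Icc.mpr ⟨le_refl 1, hn⟩
  have hnn : n ∈ Finset.Icc 1 n := Finset.mem_Icc.mpr ⟨hn, le_refl n⟩
  have hsmono : ∀ j, 1 ≤ j → j ≤ n → s 1 ≤ s j := by
    intro j h1 h2
    induction j, h1 using Nat.le_induction with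
    | base => exact le_refl _
    | succ k hk ih =>
      have hkn : k < n := Nat.lt_of_succ_le h2
      exact le_trans (ih (le_of_lt hkn)) (le_of_lt (hs k hk hkn))
  have hrmono : ∀ j, 1 ≤ j → j ≤ n → r j ≤ r 1 := by
    intro j h1 h2
    induction j, h1 using Nat.le_induction with
    | base => exact le_refl _
    | succ k hk ih =>
      have hkn : k < n := Nat.lt_of_succ_le h2
      exact le_trans (le_of_lt (hr k hk hkn)) (ih (le_of_lt hkn))
  have hspos : ∀ i ∈ Finset.Icc 1 n, 0 < s i := fun i hi =>
    lt_of_lt_of_le hs1 (hsmono i (Finset.mem_Icc.mp hi).1 (Finset.mem_Icc.mp hi).2)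
  have hsn : 0 < s n := hspos n hnn
  have hr1 : r n ≤ r 1 := hrmono n hn (le_refl n)
  have hr1pos : (1:ℝ) < r 1 := lt_of_lt_of_le hrn hr1
  have hQ : s n * r n ≤ lvQ r s n := by
    unfold lvQ
    have hnneg : 0 ≤ ∑ i ∈ Finset.Icc 1 (n-1), s i * (r i - r (i+1)) := by
      apply Finset.sum_nonneg
      intro i hi
      obtain ⟨hi1, hi2⟩ := Finset.mem_Icc.mp hi
      have hin : i < n := by omega
      have hs_i : 0 ≤ s i := le_of_lt (lt_of_lt_of_le hs1 (hsmono i hi1 (le_of_lt hin)))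
      have hri : r (i+1) ≤ r i := le_of_lt (hr i hi1 hin)
      nlinarith
    linarith
  have hQpos : 0 < 1 + lvQ r s n := by
    by_contra h
    push_neg at h
    have h2 : r n / (1 + lvQ r s n) ≤ 0 :=
      div_nonpos_of_nonneg_of_nonpos (by linarith) h
    linarith
  have hrQ : 1 + lvQ r s n < r n := by
    have := (one_lt_div hQpos).mp hss
    linarith
  have hkey : 1 < r n - s n * r n := by linarith
  have hsn1 : s n < 1 := by nlinarith
  have hM : 0 < r 1 - 1 - r 1 * s n := by
    nlinarith [mul_nonneg (sub_nonneg.mpr hr1) (by linarith : (0:ℝ) ≤ 1 - s n)]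
  refine ⟨hM, ?_⟩
  -- basic continuity
  have hBcont : ∀ j ∈ Finset.Icc 1 n, ∀ t : ℝ, 0 ≤ t → ContinuousAt (B j) t :=
    fun j hj t ht => (hBode j hj t ht).continuousAt
  have hPcont : ∀ j ∈ Finset.Icc 1 n, ∀ t : ℝ, 0 ≤ t → ContinuousAt (P j) t :=
    fun j hj t ht => (hPode j hj t ht).continuousAt
  -- bounds from Ω
  have htermnn : ∀ t : ℝ, 0 ≤ t → ∀ i ∈ Finset.Icc 1 n, 0 ≤ B i t + s i * P i t := by
    intro t ht i hi
    obtain ⟨hB, hP⟩ := (hΩ t ht).1 i hi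
    have := hspos i hi
    nlinarith
  have hB1le : ∀ t : ℝ, 0 ≤ t → B 1 t ≤ 1 := by
    intro t ht
    have h := Finset.single_le_sum (htermnn t ht) h1n
    have h2 := (hΩ t ht).2
    obtain ⟨_, hP⟩ := (hΩ t ht).1 1 h1n
    nlinarith [hspos 1 h1n]
  have hPle : ∀ j ∈ Finset.Icc 1 n, ∀ t : ℝ, 0 ≤ t → P j t ≤ (s j)⁻¹ := by
    intro j hj t ht
    have h := Finset.single_le_sum (htermnn t ht) hj
    have h2 := (hΩ t ht).2
    obtain ⟨hB, _⟩ := (hΩ t ht).1 j hj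
    have hsj := hspos j hj
    have hle : s j * P j t ≤ 1 := by linarith
    rw [inv_eq_one_div, le_div_iff₀ hsj]
    nlinarith
  have hPnle : ∀ t : ℝ, 0 ≤ t → P n t ≤ (s n)⁻¹ := fun t ht => hPle n hnn t ht
  have hr1pos' : (0:ℝ) < r 1 := by linarith
  -- vector field functions
  set g1 : ℝ → ℝ := fun u => r 1 * (1 - 1 / r 1 - ∑ j ∈ Finset.Icc 1 n, (B j u + s j * P j u))
      - ∑ j ∈ Finset.Icc 1 n, P j u with hg1
  set g2 : ℝ → ℝ := fun u => (s n)⁻¹ * ((∑ j ∈ Finset.Icc 1 n, B j u) - s n) with hg2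
  have hB1g : ∀ t : ℝ, 0 ≤ t → HasDerivAt (B 1) (g1 t * B 1 t) t := by
    intro t ht
    simp only [hg1]
    convert hBode 1 h1n t ht using 1
    ring
  have hPng : ∀ t : ℝ, 0 ≤ t → HasDerivAt (P n) (g2 t * P n t) t := by
    intro t ht
    simp only [hg2]
    convert hPode n hnn t ht using 1
    ring
  have hg1cont : ∀ t : ℝ, 0 ≤ t → ContinuousAt g1 t := by
    intro t ht
    simp only [hg1]
    have hsum1 : ContinuousAt (fun u => ∑ j ∈ Finset.Icc 1 n, (B j u + s j * P j u)) t := by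
      apply tendsto_finset_sum
      intro j hj
      exact (hBcont j hj t ht).add ((hPcont j hj t ht).const_mul (s j))
    have hsum2 : ContinuousAt (fun u => ∑ j ∈ Finset.Icc 1 n, P j u) t := by
      apply tendsto_finset_sum
      intro j hj
      exact hPcont j hj t ht
    exact (continuousAt_const.mul (continuousAt_const.sub hsum1)).sub hsum2
  have hg2cont : ∀ t : ℝ, 0 ≤ t → ContinuousAt g2 t := by
    intro t ht
    simp only [hg2]
    have hsum1 : ContinuousAt (fun u => ∑ j ∈ Finset.Icc 1 n, B j u) t := by
      apply tendsto_finset_sum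
      intro j hj
      exact hBcont j hj t ht
    exact continuousAt_const.mul (hsum1.sub continuousAt_const)
  have hB1pos : ∀ t : ℝ, 0 ≤ t → 0 < B 1 t := ode_pos (B 1) g1 hg1cont hB1g hB10
  have hPnpos : ∀ t : ℝ, 0 ≤ t → 0 < P n t := ode_pos (P n) g2 hg2cont hPng hPn0
  -- the contradiction argument
  set M : ℝ := r 1 - 1 - r 1 * s n with hMdef
  set f : ℝ → ℝ := fun t => ∑ j ∈ Finset.Icc 1 n, (r 1 * s j + 1) * P j t with hfdef
  show M ≤ limsup f atTop
  by_contra hcon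
  push_neg at hcon
  have hfC : ∀ t : ℝ, 0 ≤ t → f t ≤ ∑ j ∈ Finset.Icc 1 n, (r 1 * s j + 1) * (s j)⁻¹ := by
    intro t ht
    simp only [hfdef]
    apply Finset.sum_le_sum
    intro j hj
    have h1 := hPle j hj t ht
    have h2 : (0:ℝ) ≤ r 1 * s j + 1 := by nlinarith [hspos j hj]
    exact mul_le_mul_of_nonneg_left h1 h2
  have hbdd : IsBoundedUnder (· ≤ ·) atTop f :=
    isBoundedUnder_of_eventually_le (a := ∑ j ∈ Finset.Icc 1 n, (r 1 * s j + 1) * (s j)⁻¹)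
      (by filter_upwards [eventually_ge_atTop (0:ℝ)] with t ht using hfC t ht)
  set L : ℝ := limsup f atTop with hL
  have hev : ∀ᶠ t in atTop, f t < (L + M)/2 :=
    eventually_lt_of_limsup_lt (by rw [← hL]; linarith) hbdd
  obtain ⟨T, hT⟩ := eventually_atTop.mp (hev.and (eventually_ge_atTop (0:ℝ)))
  set a : ℝ := (r 1 * s n)⁻¹ with hadef
  have hapos : 0 < a := by rw [hadef]; exact inv_pos.mpr (by nlinarith)
  set W : ℝ → ℝ := fun u => a * Real.log (B 1 u) + Real.log (P n u) with hWdef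
  have hWd : ∀ t : ℝ, 0 ≤ t → HasDerivAt W (a * (M - f t)) t := by
    intro t ht
    have hB1 := hB1pos t ht
    have hPn := hPnpos t ht
    have d1 : HasDerivAt (fun u => Real.log (B 1 u)) ((B 1 t)⁻¹ * (g1 t * B 1 t)) t :=
      (Real.hasDerivAt_log hB1.ne').comp t (hB1g t ht)
    have d2 : HasDerivAt (fun u => Real.log (P n u)) ((P n t)⁻¹ * (g2 t * P n t)) t :=
      (Real.hasDerivAt_log hPn.ne').comp t (hPng t ht)
    have hd := (d1.const_mul a).add d2
    rw [hWdef]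
    refine hd.congr_deriv (Eq.symm ?_)
    have hsum : (∑ j ∈ Finset.Icc 1 n, (B j t + s j * P j t))
        = (∑ j ∈ Finset.Icc 1 n, B j t) + ∑ j ∈ Finset.Icc 1 n, s j * P j t :=
      Finset.sum_add_distrib
    have hf2 : f t = r 1 * (∑ j ∈ Finset.Icc 1 n, s j * P j t) + ∑ j ∈ Finset.Icc 1 n, P j t := by
      simp only [hfdef]
      rw [Finset.mul_sum, ← Finset.sum_add_distrib]
      exact Finset.sum_congr rfl (fun j hj => by ring)
    simp only [hg1, hg2, hadef, hMdef]
    rw [hsum, hf2]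
    field_simp
    ring
  set T' : ℝ := max T 0 with hT'def
  have hT'0 : (0:ℝ) ≤ T' := le_max_right T 0
  set dl : ℝ := a * (M - (L + M)/2) with hdldef
  have hdlpos : 0 < dl := by rw [hdldef]; apply mul_pos hapos; linarith
  have hgrow := ode_grow W (fun t => a * (M - f t)) T' dl
      (fun t ht => hWd t (le_trans hT'0 ht))
      (fun t ht => by
        have h1 := (hT t (le_trans (le_max_left T 0) ht)).1
        rw [hdldef]
        apply mul_le_mul_of_nonneg_left _ (le_of_lt hapos)
        linarith)
  have hWub : ∀ t : ℝ, 0 ≤ t → W t ≤ Real.log (s n)⁻¹ := by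
    intro t ht
    have h1 : Real.log (B 1 t) ≤ 0 := Real.log_nonpos (le_of_lt (hB1pos t ht)) (hB1le t ht)
    have h2 : Real.log (P n t) ≤ Real.log (s n)⁻¹ := Real.log_le_log (hPnpos t ht) (hPnle t ht)
    have h3 : a * Real.log (B 1 t) ≤ 0 := mul_nonpos_of_nonneg_of_nonpos (le_of_lt hapos) h1
    simp only [hWdef]
    linarith
  set U : ℝ := Real.log (s n)⁻¹ - W T' + 1 with hUdef
  have hU1 : 1 ≤ U := by have := hWub T' hT'0; rw [hUdef]; linarith
  set t0 : ℝ := T' + U / dl with ht0def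
  have ht0T : T' ≤ t0 := by
    rw [ht0def]
    have : 0 ≤ U / dl := div_nonneg (by linarith) (le_of_lt hdlpos)
    linarith
  have hg := hgrow t0 ht0T
  have hcancel : dl * (t0 - T') = U := by
    rw [ht0def]
    field_simp
    ring
  have hub := hWub t0 (le_trans hT'0 ht0T)
  rw [hcancel, hUdef] at hg
  linarith
end

section
/- Let (B,P) be a solution of (LV) in Ω and let 1 ≤ i ≤ n. If limsup_{t→∞} Σ_{j=1}^i B_j(t) < s_i, then P_i(t) → 0 as t → ∞. -/
open Filter

theorem stmt13
    (n : ℕ) (hn : 1 ≤ n) (r s : ℕ → ℝ)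
    (hr : ∀ i, 1 ≤ i → i < n → r (i + 1) < r i) (hrn : 1 < r n)
    (hs1 : 0 < s 1) (hs : ∀ i, 1 ≤ i → i < n → s i < s (i + 1))
    (B P : ℕ → ℝ → ℝ) (hsol : IsSolutionLV n r s B P)
    (i : ℕ) (h1i : 1 ≤ i) (hin : i ≤ n)
    (hlim : limsup (fun t => ∑ j ∈ Finset.Icc 1 i, B j t) atTop < s i) :
    Tendsto (P i) atTop (nhds 0) := by
  obtain ⟨hB, hP, hΩ⟩ := hsol
  set u : ℝ → ℝ := fun t => ∑ j ∈ Finset.Icc 1 i, B j t with hu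
  have hi : i ∈ Finset.Icc 1 n := Finset.mem_Icc.mpr ⟨h1i, hin⟩
  -- positivity of s
  have hspos : ∀ k, 1 ≤ k → k ≤ n → 0 < s k := by
    intro k hk1 hkn
    induction k with
    | zero => omega
    | succ k ih =>
      rcases Nat.eq_or_lt_of_le hk1 with h | h
      · simpa [← h] using hs1
      · have hk1' : 1 ≤ k := by omega
        have hkn' : k < n := by omega
        exact (ih hk1' (le_of_lt hkn')).trans (hs k hk1' hkn')
  have hsi : 0 < s i := hspos i h1i hin
  -- P i nonneg
  have hPnn : ∀ t : ℝ, 0 ≤ t → 0 ≤ P i t := fun t ht => ((hΩ t ht).1 i hi).2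
  -- u bounded above by 1 eventually
  have hub : ∀ t : ℝ, 0 ≤ t → u t ≤ 1 := by
    intro t ht
    have h1 := (hΩ t ht).2
    have h2 : u t ≤ ∑ j ∈ Finset.Icc 1 n, B j t := by
      apply Finset.sum_le_sum_of_subset_of_nonneg
      · exact Finset.Icc_subset_Icc_right hin
      · intro j hj _
        exact ((hΩ t ht).1 j hj).1
    have h3 : ∑ j ∈ Finset.Icc 1 n, B j t ≤ ∑ j ∈ Finset.Icc 1 n, (B j t + s j * P j t) := by
      apply Finset.sum_le_sum
      intro j hj
      have := ((hΩ t ht).1 j hj).2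
      have hsj := hspos j (Finset.mem_Icc.mp hj).1 (Finset.mem_Icc.mp hj).2
      nlinarith
    linarith
  have hbdd : IsBoundedUnder (· ≤ ·) atTop u :=
    isBoundedUnder_of_eventually_le ((eventually_ge_atTop (0:ℝ)).mono hub)
  -- choose b between limsup and s i
  set b : ℝ := (limsup u atTop + s i) / 2 with hbdef
  have hb1 : limsup u atTop < b := by simp only [hbdef]; linarith
  have hb2 : b < s i := by simp only [hbdef]; linarith
  have hev : ∀ᶠ t in atTop, u t < b ∧ 0 ≤ t :=
    (eventually_lt_of_limsup_lt hb1 hbdd).and (eventually_ge_atTop 0)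
  obtain ⟨T, hT⟩ := eventually_atTop.mp hev
  have hT0 : 0 ≤ T := (hT T le_rfl).2
  set c : ℝ := (s i - b) / s i with hcdef
  have hc : 0 < c := div_pos (by linarith) hsi
  set g : ℝ → ℝ := fun t => P i t * Real.exp (c * t) with hg
  have hgderiv : ∀ t : ℝ, 0 ≤ t →
      HasDerivAt g ((s i)⁻¹ * P i t * (u t - s i) * Real.exp (c * t)
        + P i t * (Real.exp (c * t) * c)) t := by
    intro t ht
    have h1 : HasDerivAt (fun x : ℝ => Real.exp (c * x)) (Real.exp (c * t) * c) t := by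
      have : HasDerivAt (fun x : ℝ => c * x) c t := by
        simpa using (hasDerivAt_id t).const_mul c
      simpa using this.exp
    exact (hP i hi t ht).mul h1
  have hanti : AntitoneOn g (Set.Ici T) := by
    apply antitoneOn_of_deriv_nonpos (convex_Ici T)
    · intro t ht
      exact ((hgderiv t (hT0.trans ht)).differentiableAt).continuousAt.continuousWithinAt
    · intro t ht
      rw [interior_Ici] at ht
      exact ((hgderiv t (hT0.trans (le_of_lt ht))).differentiableAt).differentiableWithinAt
    · intro t ht
      rw [interior_Ici] at ht
      have ht' : T ≤ t := le_of_lt ht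
      have ht0 : 0 ≤ t := hT0.trans ht'
      rw [(hgderiv t ht0).deriv]
      have hutb : u t < b := (hT t ht').1
      have hPt : 0 ≤ P i t := hPnn t ht0
      have he : 0 < Real.exp (c * t) := Real.exp_pos _
      have hkey : (s i)⁻¹ * (u t - s i) + c ≤ 0 := by
        have : c = (s i - b) / s i := hcdef
        rw [this]
        rw [div_eq_mul_inv, inv_eq_one_div]
        have hsi' : (0:ℝ) < 1 / s i := by positivity
        nlinarith
      nlinarith [mul_nonneg hPt he.le]
  -- squeeze
  set C : ℝ := g T with hC
  have hupper : ∀ t : ℝ, T ≤ t → P i t ≤ C * Real.exp (-(c * t)) := by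
    intro t ht
    have h1 : g t ≤ C := hanti (Set.self_mem_Ici) (Set.mem_Ici.mpr ht) ht
    have h2 : Real.exp (c * t) * Real.exp (-(c * t)) = 1 := by
      rw [← Real.exp_add]; simp
    have h3 : P i t * Real.exp (c * t) ≤ C := h1
    have he : 0 ≤ Real.exp (-(c * t)) := (Real.exp_pos _).le
    calc P i t = P i t * (Real.exp (c * t) * Real.exp (-(c * t))) := by rw [h2]; ring
      _ = (P i t * Real.exp (c * t)) * Real.exp (-(c * t)) := by ring
      _ ≤ C * Real.exp (-(c * t)) := mul_le_mul_of_nonneg_right h3 he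
  have hexp0 : Tendsto (fun t : ℝ => C * Real.exp (-(c * t))) atTop (nhds 0) := by
    have h1 : Tendsto (fun t : ℝ => c * t) atTop atTop :=
      Tendsto.const_mul_atTop hc tendsto_id
    have h2 : Tendsto (fun t : ℝ => Real.exp (-(c * t))) atTop (nhds 0) :=
      Real.tendsto_exp_neg_atTop_nhds_zero.comp h1
    simpa using h2.const_mul C
  apply tendsto_of_tendsto_of_tendsto_of_le_of_le' tendsto_const_nhds hexp0
  · exact (eventually_ge_atTop (0:ℝ)).mono hPnn
  · exact (eventually_ge_atTop T).mono hupper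
end

section
/- Let (B,P) be a solution of (LV) in Ω and let 1 ≤ i < j ≤ n. If P_i(0) > 0 and limsup_{t→∞} (B_{i+1}(t) + B_{i+2}(t) + ⋯ + B_j(t)) < s_j − s_i, then P_j(t) → 0 as t → ∞. -/
open Filter

lemma ode_rep (f g : ℝ → ℝ)
    (hf : ∀ t : ℝ, 0 ≤ t → HasDerivAt f (g t * f t) t)
    (hg : Continuous g) (t : ℝ) (ht : 0 ≤ t) :
    f t = f 0 * Real.exp (∫ τ in (0:ℝ)..t, g τ) := by
  set G : ℝ → ℝ := fun u => ∫ τ in (0:ℝ)..u, g τ with hG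
  have hGd : ∀ u : ℝ, HasDerivAt G (g u) u := by
    intro u
    exact intervalIntegral.integral_hasDerivAt_right (hg.intervalIntegrable 0 u)
      (hg.stronglyMeasurable.stronglyMeasurableAtFilter) hg.continuousAt
  set h : ℝ → ℝ := fun u => f u * Real.exp (-G u) with hh
  have hd : ∀ u ∈ Set.Ico (0:ℝ) t, HasDerivWithinAt h 0 (Set.Ici u) u := by
    intro u hu
    have h1 : HasDerivAt (fun v => Real.exp (-G v)) (Real.exp (-G u) * (-g u)) u := by
      have := ((hGd u).neg).exp
      simpa using this
    have h2 := (hf u hu.1).mul h1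
    have : g u * f u * Real.exp (-G u) + f u * (Real.exp (-G u) * -g u) = 0 := by ring
    rw [this] at h2
    exact h2.hasDerivWithinAt
  have hcont : ContinuousOn h (Set.Icc 0 t) := by
    intro u hu
    exact (((hf u hu.1).continuousAt.mul
      (((hGd u).neg).exp.continuousAt))).continuousWithinAt
  have := constant_of_has_deriv_right_zero hcont hd t (Set.mem_Icc.2 ⟨ht, le_rfl⟩)
  have h0 : G 0 = 0 := by simp [hG]
  have : f t * Real.exp (-G t) = f 0 := by simpa [hh, h0] using this
  have := congrArg (fun x => x * Real.exp (G t)) this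
  rw [mul_assoc, ← Real.exp_add, neg_add_cancel, Real.exp_zero, mul_one] at this
  exact this

theorem stmt14
    (n : ℕ) (hn : 1 ≤ n) (r s : ℕ → ℝ)
    (hr : ∀ i, 1 ≤ i → i < n → r (i + 1) < r i) (hrn : 1 < r n)
    (hs1 : 0 < s 1) (hs : ∀ i, 1 ≤ i → i < n → s i < s (i + 1))
    (B P : ℕ → ℝ → ℝ) (hsol : IsSolutionLV n r s B P)
    (i j : ℕ) (h1i : 1 ≤ i) (hij : i < j) (hjn : j ≤ n)
    (hPi0 : 0 < P i 0)
    (hlim : limsup (fun t => ∑ m ∈ Finset.Icc (i + 1) j, B m t) atTop < s j - s i) :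
    Tendsto (P j) atTop (nhds 0) := by
  obtain ⟨hB, hP, hΩ⟩ := hsol
  have h1j : 1 ≤ j := h1i.trans hij.le
  have hin : i ≤ n := hij.le.trans hjn
  have hmemi : i ∈ Finset.Icc 1 n := Finset.mem_Icc.2 ⟨h1i, hin⟩
  have hmemj : j ∈ Finset.Icc 1 n := Finset.mem_Icc.2 ⟨h1j, hjn⟩
  -- monotonicity and positivity of s
  have hmono : ∀ a b : ℕ, 1 ≤ a → a ≤ b → b ≤ n → s a ≤ s b := by
    intro a b ha hab hbn
    induction b, hab using Nat.le_induction with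
    | base => exact le_rfl
    | succ b hab ih =>
        exact (ih (Nat.le_of_succ_le hbn)).trans
          (hs b (ha.trans hab) (Nat.lt_of_succ_le hbn)).le
  have hsi : 0 < s i := lt_of_lt_of_le hs1 (hmono 1 i le_rfl h1i hin)
  have hsj : 0 < s j := lt_of_lt_of_le hs1 (hmono 1 j le_rfl h1j hjn)
  -- continuity of the (clamped) B's
  have hBc : ∀ m ∈ Finset.Icc 1 n, Continuous (fun τ : ℝ => B m (max τ 0)) := by
    intro m hm
    rw [continuous_iff_continuousAt]
    intro τ
    have hmax : Continuous (fun τ : ℝ => max τ 0) := continuous_id.max continuous_const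
    exact ContinuousAt.comp (g := B m) (f := fun τ : ℝ => max τ 0) (x := τ)
      (hB m hm _ (le_max_right τ 0)).continuousAt hmax.continuousAt
  set g : ℕ → ℝ → ℝ :=
    fun k τ => (s k)⁻¹ * ((∑ m ∈ Finset.Icc 1 k, B m (max τ 0)) - s k) with hgdef
  have hgc : ∀ k : ℕ, 1 ≤ k → k ≤ n → Continuous (g k) := by
    intro k h1 h2
    apply continuous_const.mul
    apply Continuous.sub _ continuous_const
    exact continuous_finset_sum _ fun m hm => hBc m
      (Finset.Icc_subset_Icc_right h2 hm)
  -- representation of P k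
  have hrep : ∀ k : ℕ, 1 ≤ k → k ≤ n → ∀ t : ℝ, 0 ≤ t →
      P k t = P k 0 * Real.exp (∫ τ in (0:ℝ)..t, g k τ) := by
    intro k h1 h2 t ht
    apply ode_rep (P k) (g k) ?_ (hgc k h1 h2) t ht
    intro u hu
    have h3 := hP k (Finset.mem_Icc.2 ⟨h1, h2⟩) u hu
    convert h3 using 1
    simp only [hgdef, max_eq_left hu]
    ring
  set G : ℕ → ℝ → ℝ := fun k t => ∫ τ in (0:ℝ)..t, g k τ with hGdef
  set F : ℝ → ℝ :=
    fun τ => (∑ m ∈ Finset.Icc (i+1) j, B m (max τ 0)) - (s j - s i) with hFdef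
  have hFc : Continuous F := by
    apply Continuous.sub _ continuous_const
    exact continuous_finset_sum _ fun m hm => by
      have hm' : m ∈ Finset.Icc 1 n := by
        simp only [Finset.mem_Icc] at hm ⊢; omega
      exact hBc m hm'
  -- key combination identity
  have hcomb : ∀ t : ℝ, s j * G j t - s i * G i t = ∫ τ in (0:ℝ)..t, F τ := by
    intro t
    simp only [hGdef]
    rw [← intervalIntegral.integral_const_mul, ← intervalIntegral.integral_const_mul,
      ← intervalIntegral.integral_sub
        (by exact (continuous_const.mul (hgc j h1j hjn)).intervalIntegrable 0 t :
          IntervalIntegrable (fun x => s j * g j x) MeasureTheory.volume 0 t)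
        (by exact (continuous_const.mul (hgc i h1i hin)).intervalIntegrable 0 t :
          IntervalIntegrable (fun x => s i * g i x) MeasureTheory.volume 0 t)]
    apply intervalIntegral.integral_congr
    intro τ _
    simp only [hgdef, hFdef]
    have hsum : (∑ m ∈ Finset.Icc 1 j, B m (max τ 0))
        = (∑ m ∈ Finset.Icc 1 i, B m (max τ 0))
          + ∑ m ∈ Finset.Icc (i+1) j, B m (max τ 0) := by
      rw [show (1:ℕ) = 0 + 1 from rfl, Finset.Icc_add_one_left_eq_Ioc, Finset.Icc_add_one_left_eq_Ioc,
        show Finset.Icc (i + (0 + 1)) j = Finset.Ioc i j from Finset.Icc_add_one_left_eq_Ioc i j]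
      exact (Finset.sum_Ioc_consecutive _ (Nat.zero_le i) hij.le).symm
    rw [← mul_assoc, ← mul_assoc, mul_inv_cancel₀ (ne_of_gt hsj),
      mul_inv_cancel₀ (ne_of_gt hsi), one_mul, one_mul, hsum]
    ring
  -- exploit the limsup hypothesis
  set c : ℝ := (limsup (fun t => ∑ m ∈ Finset.Icc (i + 1) j, B m t) atTop
    + (s j - s i)) / 2 with hcdef
  have hc1 : limsup (fun t => ∑ m ∈ Finset.Icc (i + 1) j, B m t) atTop < c := by
    rw [hcdef]; linarith
  have hc2 : c < s j - s i := by rw [hcdef]; linarith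
  have hub : ∀ t : ℝ, 0 ≤ t → (∑ m ∈ Finset.Icc (i + 1) j, B m t) ≤ (n:ℝ) := by
    intro t ht
    have h1 : ∀ m ∈ Finset.Icc (i+1) j, B m t ≤ 1 := by
      intro m hm
      have hm' : m ∈ Finset.Icc 1 n := by
        simp only [Finset.mem_Icc] at hm ⊢; omega
      have hm1 : 1 ≤ m := (Finset.mem_Icc.1 hm').1
      have hmn : m ≤ n := (Finset.mem_Icc.1 hm').2
      have h2 := (hΩ t ht).2
      have h3 : B m t + s m * P m t ≤ ∑ k ∈ Finset.Icc 1 n, (B k t + s k * P k t) := by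
        apply Finset.single_le_sum (fun k hk => ?_) hm'
        have hk1 := (Finset.mem_Icc.1 hk).1
        have hkn := (Finset.mem_Icc.1 hk).2
        exact add_nonneg ((hΩ t ht).1 k hk).1
          (mul_nonneg (lt_of_lt_of_le hs1 (hmono 1 k le_rfl hk1 hkn)).le
            ((hΩ t ht).1 k hk).2)
      have h4 : 0 ≤ s m * P m t :=
        mul_nonneg (lt_of_lt_of_le hs1 (hmono 1 m le_rfl hm1 hmn)).le
          ((hΩ t ht).1 m hm').2
      linarith
    calc (∑ m ∈ Finset.Icc (i + 1) j, B m t) ≤ ∑ m ∈ Finset.Icc (i+1) j, (1:ℝ) :=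
          Finset.sum_le_sum h1
      _ = ((Finset.Icc (i+1) j).card : ℝ) := by simp
      _ ≤ (n:ℝ) := by
          rw [Nat.card_Icc]
          have : j + 1 - (i + 1) ≤ n := by omega
          exact_mod_cast this
  have hbdd : IsBoundedUnder (· ≤ ·) atTop
      (fun t => ∑ m ∈ Finset.Icc (i + 1) j, B m t) :=
    ⟨(n:ℝ), eventually_map.2 (eventually_atTop.2 ⟨0, hub⟩)⟩
  have hev := eventually_lt_of_limsup_lt hc1 hbdd
  obtain ⟨T0, hT0⟩ := eventually_atTop.1 hev
  set T : ℝ := max T0 0 with hTdef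
  have hT0' : (0:ℝ) ≤ T := le_max_right _ _
  set ε : ℝ := s j - s i - c with hεdef
  have hε : 0 < ε := by rw [hεdef]; linarith
  have hF : ∀ τ : ℝ, T ≤ τ → F τ ≤ -ε := by
    intro τ hτ
    have hτ0 : (0:ℝ) ≤ τ := hT0'.trans hτ
    have h5 := hT0 τ ((le_max_left T0 0).trans hτ)
    simp only [hFdef, max_eq_left hτ0]
    rw [hεdef]
    linarith
  set C0 : ℝ := ∫ τ in (0:ℝ)..T, F τ with hC0def
  have hint : ∀ t : ℝ, T ≤ t → (∫ τ in (0:ℝ)..t, F τ) ≤ C0 - ε * (t - T) := by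
    intro t htT
    have h1 : IntervalIntegrable F MeasureTheory.volume 0 T := hFc.intervalIntegrable _ _
    have h2 : IntervalIntegrable F MeasureTheory.volume T t := hFc.intervalIntegrable _ _
    rw [← intervalIntegral.integral_add_adjacent_intervals h1 h2]
    have h3 : (∫ τ in T..t, F τ) ≤ ∫ _ in T..t, (-ε) :=
      intervalIntegral.integral_mono_on htT h2 intervalIntegrable_const
        (fun x hx => hF x hx.1)
    rw [intervalIntegral.integral_const, smul_eq_mul] at h3
    have : (t - T) * (-ε) = -(ε * (t - T)) := by ring
    rw [this] at h3
    linarith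
  -- bound on G i
  set M : ℝ := Real.log ((s i * P i 0)⁻¹) with hMdef
  have hGi : ∀ t : ℝ, 0 ≤ t → G i t ≤ M := by
    intro t ht
    have hrepi : P i t = P i 0 * Real.exp (G i t) := hrep i h1i hin t ht
    have hPle : s i * P i t ≤ 1 := by
      have h2 := (hΩ t ht).2
      have h3 : B i t + s i * P i t ≤ ∑ k ∈ Finset.Icc 1 n, (B k t + s k * P k t) := by
        apply Finset.single_le_sum (fun k hk => ?_) hmemi
        have hk1 := (Finset.mem_Icc.1 hk).1
        have hkn := (Finset.mem_Icc.1 hk).2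
        exact add_nonneg ((hΩ t ht).1 k hk).1
          (mul_nonneg (lt_of_lt_of_le hs1 (hmono 1 k le_rfl hk1 hkn)).le
            ((hΩ t ht).1 k hk).2)
      have h4 := ((hΩ t ht).1 i hmemi).1
      linarith
    have hpos : 0 < s i * P i 0 := mul_pos hsi hPi0
    have hexp : Real.exp (G i t) ≤ (s i * P i 0)⁻¹ := by
      rw [hrepi, ← mul_assoc] at hPle
      calc Real.exp (G i t)
          = (s i * P i 0)⁻¹ * ((s i * P i 0) * Real.exp (G i t)) := by
            rw [← mul_assoc, inv_mul_cancel₀ (ne_of_gt hpos), one_mul]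
        _ ≤ (s i * P i 0)⁻¹ * 1 :=
            mul_le_mul_of_nonneg_left hPle (inv_nonneg.2 hpos.le)
        _ = (s i * P i 0)⁻¹ := mul_one _
    calc G i t = Real.log (Real.exp (G i t)) := (Real.log_exp _).symm
      _ ≤ M := by
          rw [hMdef]
          exact Real.log_le_log (Real.exp_pos _) hexp
  -- G j tends to -infinity
  have hGj : Tendsto (fun t => G j t) atTop atBot := by
    apply tendsto_atBot_mono' atTop
      (f₁ := fun t : ℝ => (s i * M + C0 + ε * T - ε * t) / s j)
    · filter_upwards [eventually_ge_atTop T] with t ht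
      have ht0 : (0:ℝ) ≤ t := hT0'.trans ht
      have h1 := hcomb t
      have h2 := hint t ht
      have h4 : s i * G i t ≤ s i * M :=
        mul_le_mul_of_nonneg_left (hGi t ht0) hsi.le
      rw [le_div_iff₀ hsj]
      nlinarith
    · rw [tendsto_div_const_atBot_of_pos hsj]
      have h5 : Tendsto (fun t : ℝ => ε * t) atTop atTop :=
        Tendsto.const_mul_atTop hε tendsto_id
      have h6 : Tendsto (fun t : ℝ => -(ε * t)) atTop atBot :=
        tendsto_neg_atTop_atBot.comp h5
      have h7 := tendsto_atBot_add_const_left atTop (s i * M + C0 + ε * T) h6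
      simpa [sub_eq_add_neg] using h7
  -- conclude
  have hexp0 : Tendsto (fun t => Real.exp (G j t)) atTop (nhds 0) :=
    Real.tendsto_exp_atBot.comp hGj
  have h8 : Tendsto (fun t => P j 0 * Real.exp (G j t)) atTop (nhds 0) := by
    have := hexp0.const_mul (P j 0)
    simpa using this
  apply h8.congr'
  filter_upwards [eventually_ge_atTop (0:ℝ)] with t ht
  exact (hrep j h1j hjn t ht).symm
end

section
/- Let (B,P) be a solution of (LV) in Ω and let 1 ≤ i < j ≤ n. If B_i(0) > 0 and limsup_{t→∞} (P_i(t) + P_{i+1}(t) + ⋯ + P_{j−1}(t)) < (r_i − r_j)/(1 + r_1), then B_j(t) → 0 as t → ∞. -/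
open Filter

section Aux
open Set intervalIntegral

lemma contPlus {f : ℝ → ℝ} (h : ∀ t : ℝ, 0 ≤ t → ContinuousAt f t) :
    Continuous (fun t : ℝ => f (max t 0)) := by
  rw [continuous_iff_continuousAt]
  intro t
  have hm : ContinuousAt (fun u : ℝ => max u 0) t :=
    (continuous_id.max continuous_const).continuousAt
  exact ContinuousAt.comp (h (max t 0) (le_max_right t 0)) hm

lemma expRep {x G : ℝ → ℝ} (hG : Continuous G)
    (hx : ∀ t : ℝ, 0 ≤ t → HasDerivAt x (G t * x t) t) :
    ∀ t : ℝ, 0 ≤ t → x t = x 0 * Real.exp (∫ τ in (0:ℝ)..t, G τ) := by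
  set I : ℝ → ℝ := fun t => ∫ τ in (0:ℝ)..t, G τ with hI
  have hIse : ∀ t : ℝ, HasDerivAt I (G t) t := fun t =>
    intervalIntegral.integral_hasDerivAt_right (hG.intervalIntegrable 0 t)
      (hG.stronglyMeasurableAtFilter _ _) hG.continuousAt
  set g : ℝ → ℝ := fun t => x t * Real.exp (-(I t)) with hg
  have hgd : ∀ t : ℝ, 0 ≤ t → HasDerivAt g 0 t := by
    intro t ht
    have h1 : HasDerivAt (fun u => Real.exp (-(I u))) (-(G t) * Real.exp (-(I t))) t := by
      have := ((hIse t).neg).exp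
      simpa [mul_comm] using this
    have : HasDerivAt (fun u => x u * Real.exp (-(I u))) _ t := (hx t ht).mul h1
    convert this using 1
    ring
  intro t ht
  have key : g t = g 0 := by
    rcases eq_or_lt_of_le ht with h | h
    · rw [← h]
    · have hcont : ContinuousOn g (Icc 0 t) := fun u hu =>
        ((hgd u hu.1).continuousAt).continuousWithinAt
      exact constant_of_has_deriv_right_zero hcont
        (fun u hu => ((hgd u hu.1).hasDerivWithinAt)) t (by constructor <;> linarith)
  have hI0 : I 0 = 0 := intervalIntegral.integral_same
  have h2 : x t * Real.exp (-(I t)) = x 0 := by simpa [hg, hI0] using key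
  have h3 : Real.exp (-(I t)) * Real.exp (I t) = 1 := by
    rw [← Real.exp_add]; simp
  calc x t = x t * (Real.exp (-(I t)) * Real.exp (I t)) := by rw [h3]; ring
    _ = (x t * Real.exp (-(I t))) * Real.exp (I t) := by ring
    _ = x 0 * Real.exp (I t) := by rw [h2]

end Aux

set_option maxHeartbeats 1000000 in
theorem stmt15
    (n : ℕ) (hn : 1 ≤ n) (r s : ℕ → ℝ)
    (hr : ∀ i, 1 ≤ i → i < n → r (i + 1) < r i) (hrn : 1 < r n)
    (hs1 : 0 < s 1) (hs : ∀ i, 1 ≤ i → i < n → s i < s (i + 1))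
    (B P : ℕ → ℝ → ℝ) (hsol : IsSolutionLV n r s B P)
    (i j : ℕ) (h1i : 1 ≤ i) (hij : i < j) (hjn : j ≤ n)
    (hBi0 : 0 < B i 0)
    (hlim : limsup (fun t => ∑ m ∈ Finset.Icc i (j - 1), P m t) atTop <
      (r i - r j) / (1 + r 1)) :
    Tendsto (B j) atTop (nhds 0) := by
  obtain ⟨hB, hP, hΩ⟩ := hsol
  have himem : i ∈ Finset.Icc 1 n := by simp only [Finset.mem_Icc]; omega
  have hjmem : j ∈ Finset.Icc 1 n := by simp only [Finset.mem_Icc]; omega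
  -- monotonicity of r
  have hrle : ∀ a b : ℕ, 1 ≤ a → a ≤ b → b ≤ n → r b ≤ r a := by
    intro a b ha hab hbn
    induction b, hab using Nat.le_induction with
    | base => exact le_refl _
    | succ m hm ih =>
      have h1 : r (m + 1) < r m := hr m (by omega) (by omega)
      have h2 := ih (by omega)
      linarith
  have hrlt : ∀ a b : ℕ, 1 ≤ a → a < b → b ≤ n → r b < r a := by
    intro a b ha hab hbn
    have h1 : r b ≤ r (a + 1) := hrle (a + 1) b (by omega) (by omega) hbn
    have h2 : r (a + 1) < r a := hr a ha (by omega)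
    linarith
  have hspos : ∀ m : ℕ, 1 ≤ m → m ≤ n → 0 < s m := by
    intro m hm hmn
    induction m, hm using Nat.le_induction with
    | base => exact hs1
    | succ k hk ih =>
      have h1 : s k < s (k + 1) := hs k hk (by omega)
      have h2 := ih (by omega)
      linarith
  have hri1 : 1 < r i := lt_of_lt_of_le hrn (hrle i n h1i (by omega) le_rfl)
  have hrj1 : 1 < r j := lt_of_lt_of_le hrn (hrle j n (by omega) hjn le_rfl)
  have hrij : r j < r i := hrlt i j h1i hij hjn
  have hrir1 : r i ≤ r 1 := hrle 1 i le_rfl h1i (by omega)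
  have hrjr1 : r j ≤ r 1 := hrle 1 j le_rfl (by omega) hjn
  have hripos : (0:ℝ) < r i := by linarith
  -- basic bounds in Ω
  have hBnn : ∀ m ∈ Finset.Icc 1 n, ∀ t : ℝ, 0 ≤ t → 0 ≤ B m t :=
    fun m hm t ht => ((hΩ t ht).1 m hm).1
  have hPnn : ∀ m ∈ Finset.Icc 1 n, ∀ t : ℝ, 0 ≤ t → 0 ≤ P m t :=
    fun m hm t ht => ((hΩ t ht).1 m hm).2
  have htermnn : ∀ t : ℝ, 0 ≤ t → ∀ k ∈ Finset.Icc 1 n, 0 ≤ B k t + s k * P k t := by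
    intro t ht k hk
    have h1 := hBnn k hk t ht
    have h2 := hPnn k hk t ht
    have h3 := hspos k (Finset.mem_Icc.1 hk).1 (Finset.mem_Icc.1 hk).2
    positivity
  have hBle1 : ∀ m ∈ Finset.Icc 1 n, ∀ t : ℝ, 0 ≤ t → B m t ≤ 1 := by
    intro m hm t ht
    have h1 : B m t + s m * P m t ≤ ∑ k ∈ Finset.Icc 1 n, (B k t + s k * P k t) :=
      Finset.single_le_sum (htermnn t ht) hm
    have h2 := (hΩ t ht).2
    have h3 := hPnn m hm t ht
    have h4 := hspos m (Finset.mem_Icc.1 hm).1 (Finset.mem_Icc.1 hm).2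
    nlinarith
  have hPle : ∀ m ∈ Finset.Icc 1 n, ∀ t : ℝ, 0 ≤ t → P m t ≤ (s m)⁻¹ := by
    intro m hm t ht
    have h1 : B m t + s m * P m t ≤ ∑ k ∈ Finset.Icc 1 n, (B k t + s k * P k t) :=
      Finset.single_le_sum (htermnn t ht) hm
    have h2 := (hΩ t ht).2
    have h3 := hBnn m hm t ht
    have h4 := hspos m (Finset.mem_Icc.1 hm).1 (Finset.mem_Icc.1 hm).2
    have h5 : s m * P m t ≤ 1 := by linarith
    rw [← one_div]
    rw [le_div_iff₀ h4]
    linarith [mul_comm (P m t) (s m)]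
  -- continuity
  have hBc : ∀ m ∈ Finset.Icc 1 n, ∀ t : ℝ, 0 ≤ t → ContinuousAt (B m) t :=
    fun m hm t ht => (hB m hm t ht).continuousAt
  have hPc : ∀ m ∈ Finset.Icc 1 n, ∀ t : ℝ, 0 ≤ t → ContinuousAt (P m) t :=
    fun m hm t ht => (hP m hm t ht).continuousAt
  have hSc : ∀ t : ℝ, 0 ≤ t →
      ContinuousAt (fun u => ∑ k ∈ Finset.Icc 1 n, (B k u + s k * P k u)) t := by
    intro t ht
    exact tendsto_finset_sum _ (fun k hk =>
      ((hBc k hk t ht).add ((continuousAt_const).mul (hPc k hk t ht))))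
  have hQc : ∀ m : ℕ, 1 ≤ m → ∀ t : ℝ, 0 ≤ t →
      ContinuousAt (fun u => ∑ k ∈ Finset.Icc m n, P k u) t := by
    intro m hm t ht
    exact tendsto_finset_sum _ (fun k hk => hPc k
      (by simp only [Finset.mem_Icc] at hk ⊢; omega) t ht)
  -- the coefficient functions
  set F : ℕ → ℝ → ℝ := fun m t =>
    r m * (1 - 1 / r m - ∑ k ∈ Finset.Icc 1 n, (B k t + s k * P k t))
      - ∑ k ∈ Finset.Icc m n, P k t with hF
  set G : ℕ → ℝ → ℝ := fun m t => F m (max t 0) with hG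
  have hFc : ∀ m : ℕ, 1 ≤ m → ∀ t : ℝ, 0 ≤ t → ContinuousAt (F m) t := by
    intro m hm t ht
    exact (continuousAt_const.mul ((continuousAt_const.sub (hSc t ht)))).sub (hQc m hm t ht)
  have hGc : ∀ m : ℕ, 1 ≤ m → Continuous (G m) :=
    fun m hm => contPlus (hFc m hm)
  have hBderiv : ∀ m ∈ Finset.Icc 1 n, ∀ t : ℝ, 0 ≤ t →
      HasDerivAt (B m) (G m t * B m t) t := by
    intro m hm t ht
    have := hB m hm t ht
    convert this using 1
    simp only [hG, hF, max_eq_left ht]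
    ring
  -- exponential representations
  have hrepI := expRep (hGc i h1i) (hBderiv i himem)
  have hrepJ := expRep (hGc j (by omega)) (hBderiv j hjmem)
  -- bound on ∫ G i
  have hIntGi : ∀ t : ℝ, 0 ≤ t →
      (∫ τ in (0:ℝ)..t, G i τ) ≤ Real.log (B i 0)⁻¹ := by
    intro t ht
    have h1 := hrepI t ht
    have h2 := hBle1 i himem t ht
    have h3 : Real.exp (∫ τ in (0:ℝ)..t, G i τ) ≤ (B i 0)⁻¹ := by
      rw [h1] at h2
      rw [← mul_le_mul_iff_right₀ hBi0, mul_inv_cancel₀ (ne_of_gt hBi0)]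
      exact h2
    exact (Real.le_log_iff_exp_le (by positivity)).2 h3
  -- Pi and its bounds
  set Pi : ℝ → ℝ := fun t => ∑ m ∈ Finset.Icc i (j - 1), P m t with hPi
  set PiG : ℝ → ℝ := fun t => Pi (max t 0) with hPiG
  have hPimem : ∀ m ∈ Finset.Icc i (j - 1), m ∈ Finset.Icc 1 n := by
    intro m hm
    simp only [Finset.mem_Icc] at hm ⊢
    omega
  have hPic : ∀ t : ℝ, 0 ≤ t → ContinuousAt Pi t := by
    intro t ht
    exact tendsto_finset_sum _ (fun m hm => hPc m (hPimem m hm) t ht)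
  have hPiGc : Continuous PiG := contPlus hPic
  set Mb : ℝ := ∑ m ∈ Finset.Icc i (j - 1), (s m)⁻¹ with hMb
  have hPiMb : ∀ t : ℝ, 0 ≤ t → Pi t ≤ Mb :=
    fun t ht => Finset.sum_le_sum (fun m hm => hPle m (hPimem m hm) t ht)
  have hPiGMb : ∀ t : ℝ, PiG t ≤ Mb := fun t => hPiMb _ (le_max_right t 0)
  -- split lemma for Q
  have hsplit : ∀ u : ℝ, (∑ k ∈ Finset.Icc i n, P k u)
      = Pi u + ∑ k ∈ Finset.Icc j n, P k u := by
    intro u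
    have hsub : Finset.Icc j n ⊆ Finset.Icc i n :=
      Finset.Icc_subset_Icc (le_of_lt hij) le_rfl
    have hsd : Finset.Icc i n \ Finset.Icc j n = Finset.Icc i (j - 1) := by
      ext k
      simp only [Finset.mem_sdiff, Finset.mem_Icc, not_and, not_le]
      omega
    have := Finset.sum_sdiff (f := fun k => P k u) hsub
    rw [hsd] at this
    simp only [hPi]
    linarith [this]
  -- pointwise inequality
  have hpt : ∀ τ : ℝ, r i * G j τ - r j * G i τ ≤ -(r i - r j) + r j * PiG τ := by
    intro τ
    set u := max τ 0 with hu
    have hu0 : (0:ℝ) ≤ u := le_max_right τ 0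
    have hQjnn : 0 ≤ ∑ k ∈ Finset.Icc j n, P k u :=
      Finset.sum_nonneg (fun k hk => hPnn k
        (by simp only [Finset.mem_Icc] at hk ⊢; omega) u hu0)
    have hri0 : r i ≠ 0 := by linarith
    have hrj0 : r j ≠ 0 := by linarith
    have key : r i * G j τ - r j * G i τ
        = -(r i - r j) - (r i - r j) * (∑ k ∈ Finset.Icc j n, P k u)
          + r j * Pi u := by
      simp only [hG, hF, ← hu, hsplit u]
      field_simp
      ring
    rw [key]
    have : PiG τ = Pi u := rfl
    rw [this]
    nlinarith
  -- eventual bound from limsup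
  set c0 : ℝ := (r i - r j) / (1 + r 1) with hc0
  have h1r1 : (0:ℝ) < 1 + r 1 := by linarith
  have hbdd : IsBoundedUnder (· ≤ ·) atTop Pi := by
    refine ⟨Mb, ?_⟩
    rw [Filter.eventually_map]
    filter_upwards [eventually_ge_atTop (0:ℝ)] with t ht
    exact hPiMb t ht
  have hev : ∀ᶠ t in atTop, Pi t < c0 := eventually_lt_of_limsup_lt hlim hbdd
  obtain ⟨T0, hT0⟩ := eventually_atTop.1 hev
  set T : ℝ := max T0 0 with hT
  have hTnn : (0:ℝ) ≤ T := le_max_right T0 0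
  -- constants
  set K : ℝ := r j * Real.log (B i 0)⁻¹ + r j * Mb * T - r j * c0 * T with hK
  set b : ℝ := r j * c0 - (r i - r j) with hb
  have hbneg : b < 0 := by
    rw [hb, hc0]
    rw [div_eq_mul_inv]
    have h2 : r j * ((r i - r j) * (1 + r 1)⁻¹) < (r i - r j) * 1 := by
      rw [mul_comm (r j)]
      rw [mul_assoc]
      apply mul_lt_mul_of_pos_left _ (by linarith)
      have : (1 + r 1)⁻¹ * (r j) < (1 + r 1)⁻¹ * (1 + r 1) := by
        apply mul_lt_mul_of_pos_left _ (by positivity)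
        linarith
      rw [inv_mul_cancel₀ (by linarith)] at this
      linarith [mul_comm ((1 + r 1)⁻¹) (r j)]
    linarith
  -- main integral estimate
  have hmain : ∀ t : ℝ, T ≤ t → (∫ τ in (0:ℝ)..t, G j τ) ≤ (K + b * t) / r i := by
    intro t htT
    have ht0 : (0:ℝ) ≤ t := le_trans hTnn htT
    have hintGj : IntervalIntegrable (G j) MeasureTheory.volume 0 t :=
      ((hGc j (by omega)).intervalIntegrable 0 t)
    have hintGi : IntervalIntegrable (G i) MeasureTheory.volume 0 t :=
      ((hGc i h1i).intervalIntegrable 0 t)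
    have hcomb : Continuous (fun τ => r i * G j τ - r j * G i τ) :=
      (continuous_const.mul (hGc j (by omega))).sub (continuous_const.mul (hGc i h1i))
    have hrhsc : Continuous (fun τ => -(r i - r j) + r j * PiG τ) :=
      continuous_const.add (continuous_const.mul hPiGc)
    have hint1 : IntervalIntegrable (fun τ => r i * G j τ) MeasureTheory.volume 0 t :=
      (continuous_const.mul (hGc j (by omega))).intervalIntegrable 0 t
    have hint2 : IntervalIntegrable (fun τ => r j * G i τ) MeasureTheory.volume 0 t :=
      (continuous_const.mul (hGc i h1i)).intervalIntegrable 0 t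
    have e1 : r i * (∫ τ in (0:ℝ)..t, G j τ) - r j * (∫ τ in (0:ℝ)..t, G i τ)
        = ∫ τ in (0:ℝ)..t, (r i * G j τ - r j * G i τ) := by
      rw [intervalIntegral.integral_sub hint1 hint2]
      rw [intervalIntegral.integral_const_mul, intervalIntegral.integral_const_mul]
    have e2 : (∫ τ in (0:ℝ)..t, (r i * G j τ - r j * G i τ))
        ≤ ∫ τ in (0:ℝ)..t, (-(r i - r j) + r j * PiG τ) :=
      intervalIntegral.integral_mono_on ht0 (hcomb.intervalIntegrable 0 t)
        (hrhsc.intervalIntegrable 0 t) (fun τ _ => hpt τ)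
    have e3 : (∫ τ in (0:ℝ)..t, (-(r i - r j) + r j * PiG τ))
        = -(r i - r j) * t + r j * ∫ τ in (0:ℝ)..t, PiG τ := by
      rw [intervalIntegral.integral_add (f := fun _ => -(r i - r j)) (g := fun τ => r j * PiG τ)
        (intervalIntegrable_const)
        ((continuous_const.mul hPiGc).intervalIntegrable 0 t)]
      rw [intervalIntegral.integral_const, intervalIntegral.integral_const_mul]
      simp [smul_eq_mul]
      ring
    have e4 : (∫ τ in (0:ℝ)..t, PiG τ)
        = (∫ τ in (0:ℝ)..T, PiG τ) + ∫ τ in T..t, PiG τ :=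
      (intervalIntegral.integral_add_adjacent_intervals
        (hPiGc.intervalIntegrable 0 T) (hPiGc.intervalIntegrable T t)).symm
    have e5 : (∫ τ in (0:ℝ)..T, PiG τ) ≤ Mb * T := by
      have := intervalIntegral.integral_mono_on hTnn (hPiGc.intervalIntegrable 0 T)
        (intervalIntegrable_const (μ := MeasureTheory.volume) (c := Mb)) (fun τ _ => hPiGMb τ)
      rw [intervalIntegral.integral_const] at this
      simp [smul_eq_mul] at this
      linarith [this]
    have e6 : (∫ τ in T..t, PiG τ) ≤ c0 * (t - T) := by
      have hpw : ∀ τ ∈ Set.Icc T t, PiG τ ≤ c0 := by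
        intro τ hτ
        have hτ0 : (0:ℝ) ≤ τ := le_trans hTnn hτ.1
        have : PiG τ = Pi τ := by simp only [hPiG, max_eq_left hτ0]
        rw [this]
        exact (hT0 τ (le_trans (le_max_left T0 0) hτ.1)).le
      have := intervalIntegral.integral_mono_on htT (hPiGc.intervalIntegrable T t)
        (intervalIntegrable_const (μ := MeasureTheory.volume) (c := c0)) hpw
      rw [intervalIntegral.integral_const] at this
      simp [smul_eq_mul] at this
      linarith [this]
    have hGi := hIntGi t ht0
    have hrjnn : (0:ℝ) ≤ r j := by linarith
    -- combine
    have hcomb2 : r i * (∫ τ in (0:ℝ)..t, G j τ) ≤ K + b * t := by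
      have hA : r i * (∫ τ in (0:ℝ)..t, G j τ) - r j * (∫ τ in (0:ℝ)..t, G i τ)
          ≤ -(r i - r j) * t + r j * (Mb * T + c0 * (t - T)) := by
        rw [e1]
        calc (∫ τ in (0:ℝ)..t, (r i * G j τ - r j * G i τ))
            ≤ ∫ τ in (0:ℝ)..t, (-(r i - r j) + r j * PiG τ) := e2
          _ = -(r i - r j) * t + r j * ∫ τ in (0:ℝ)..t, PiG τ := e3
          _ ≤ -(r i - r j) * t + r j * (Mb * T + c0 * (t - T)) := by
              have h7 : (∫ τ in (0:ℝ)..t, PiG τ) ≤ Mb * T + c0 * (t - T) := by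
                rw [e4]; linarith
              nlinarith
      have hBnd : r j * (∫ τ in (0:ℝ)..t, G i τ) ≤ r j * Real.log (B i 0)⁻¹ :=
        mul_le_mul_of_nonneg_left hGi hrjnn
      rw [hK, hb]
      nlinarith
    rw [le_div_iff₀ hripos]
    linarith [mul_comm (∫ τ in (0:ℝ)..t, G j τ) (r i)]
  -- finish
  have hBj0nn : 0 ≤ B j 0 := hBnn j hjmem 0 le_rfl
  have hbound : ∀ t : ℝ, T ≤ t → B j t ≤ B j 0 * Real.exp ((K + b * t) / r i) := by
    intro t htT
    have ht0 : (0:ℝ) ≤ t := le_trans hTnn htT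
    rw [hrepJ t ht0]
    exact mul_le_mul_of_nonneg_left (Real.exp_le_exp.2 (hmain t htT)) hBj0nn
  have hlin : Tendsto (fun t : ℝ => (K + b * t) / r i) atTop atBot := by
    apply Tendsto.atBot_div_const hripos
    apply tendsto_atBot_add_const_left
    have h1 : Tendsto (fun t : ℝ => (-b) * t) atTop atTop :=
      Tendsto.const_mul_atTop (by linarith) tendsto_id
    have h2 := tendsto_neg_atTop_atBot.comp h1
    have h3 : (Neg.neg ∘ fun t : ℝ => (-b) * t) = fun t : ℝ => b * t := by
      funext t; simp
    rwa [h3] at h2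
  have htend : Tendsto (fun t : ℝ => B j 0 * Real.exp ((K + b * t) / r i)) atTop (nhds 0) := by
    have := (Real.tendsto_exp_atBot.comp hlin).const_mul (B j 0)
    simpa using this
  apply tendsto_of_tendsto_of_tendsto_of_le_of_le' tendsto_const_nhds htend
  · filter_upwards [eventually_ge_atTop T] with t ht
    exact hBnn j hjmem t (le_trans hTnn ht)
  · filter_upwards [eventually_ge_atTop T] with t ht
    exact hbound t ht
end
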